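/- arXiv:1009.5422 — 4 statements merged into one kernel-verified Lean document; each statement's English description precedes it below -/
import Mathlib

section
/- Suppose 0 < |B| < |B|_c and |ξ| ≤ |ξ|_{vc}^B. Then for every λ > 0 there is no nontrivial solution of the vertical problem at frequency ξ; that is, any function ψ satisfying the vertical problem at frequency ξ with growth rate λ > 0 is identically zero on [−1,1]. -/
open MeasureTheory Set Filter Topology

noncomputable section

/-- The set of Rayleigh quotients defining the critical magnetic number `|B|_c`. -/
def BcSet (g ρp ρm : ℝ) : Set ℝ :=
  {r | ∃ φ : ℝ → ℝ, (∃ K, LipschitzWith K φ) ∧ φ (-1) = 0 ∧ φ 1 = 0 ∧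
    ¬ (∀ᵐ y ∂(volume.restrict (Icc (-1:ℝ) 1)), φ y = 0) ∧
    r = g * (ρp - ρm) * (φ 0) ^ 2 / ∫ y in (-1:ℝ)..1, (deriv φ y) ^ 2}

/-- The set of quotients defining the vertical critical frequency `|ξ|_{vc}^B`. -/
def XivcSet (g ρp ρm B : ℝ) : Set ℝ :=
  {r | ∃ φ : ℝ → ℝ, ContDiff ℝ 2 φ ∧ φ (-1) = 0 ∧ φ 1 = 0 ∧
    deriv φ (-1) = 0 ∧ deriv φ 1 = 0 ∧
    0 < g * (ρp - ρm) * (φ 0) ^ 2 - B ^ 2 * ∫ y in (-1:ℝ)..1, (deriv φ y) ^ 2 ∧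
    r = (B ^ 2 * ∫ y in (-1:ℝ)..1, (deriv (deriv φ) y) ^ 2) /
        (g * (ρp - ρm) * (φ 0) ^ 2 - B ^ 2 * ∫ y in (-1:ℝ)..1, (deriv φ y) ^ 2)}

/-- The set of quotients defining the horizontal critical frequency `|ξ|_{hc}^B`. -/
def XihcSet (g ρp ρm B : ℝ) : Set ℝ :=
  {r | ∃ φ : ℝ → ℝ, (∃ K, LipschitzWith K φ) ∧ φ (-1) = 0 ∧ φ 1 = 0 ∧
    ¬ (∀ᵐ y ∂(volume.restrict (Icc (-1:ℝ) 1)), φ y = 0) ∧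
    r = (g * (ρp - ρm) * (φ 0) ^ 2 - B ^ 2 * ∫ y in (-1:ℝ)..1, (deriv φ y) ^ 2) /
        (B ^ 2 * ∫ y in (-1:ℝ)..1, (φ y) ^ 2)}

/-- The fourth-order ODE of the vertical problem, with density `ρ` and viscosity `μ`. -/
def VertODE (ρ μ B ξ lam : ℝ) (f : ℝ → ℝ) (y : ℝ) : Prop :=
  -lam ^ 2 * ρ * (ξ ^ 2 * f y - iteratedDeriv 2 f y) =
    μ * lam * (ξ ^ 4 * f y - 2 * ξ ^ 2 * iteratedDeriv 2 f y + iteratedDeriv 4 f y) +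
      B ^ 2 * (-(ξ ^ 2) * iteratedDeriv 2 f y + iteratedDeriv 4 f y)

/-- The fourth-order ODE of the horizontal problem. -/
def HorizODE (ρ μ B ξ lam : ℝ) (f : ℝ → ℝ) (y : ℝ) : Prop :=
  -lam ^ 2 * ρ * (ξ ^ 2 * f y - iteratedDeriv 2 f y) =
    μ * lam * (ξ ^ 4 * f y - 2 * ξ ^ 2 * iteratedDeriv 2 f y + iteratedDeriv 4 f y) +
      B ^ 2 * (ξ ^ 4 * f y - ξ ^ 2 * iteratedDeriv 2 f y)

/-- `ψ : [-1,1] → ℝ` solves the vertical problem at frequency `ξ` with growth rate `lam`: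
its restrictions to `[-1,0]` and `[0,1]` are `C^n` up to the endpoints (i.e. agree there with
globally `C^n` functions `ψm`, `ψp`), `ψ` and `ψ'` are continuous at `0`, the interior ODEs,
the jump conditions at `0` and the boundary conditions at `±1` hold. -/
def IsVertSol (ρp ρm μp μm g B ξ lam : ℝ) (n : ℕ∞) (ψ : ℝ → ℝ) : Prop :=
  ∃ ψm ψp : ℝ → ℝ,
    ContDiff ℝ n ψm ∧ ContDiff ℝ n ψp ∧
    (∀ y ∈ Icc (-1:ℝ) 0, ψ y = ψm y) ∧
    (∀ y ∈ Icc (0:ℝ) 1, ψ y = ψp y) ∧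
    ψp 0 = ψm 0 ∧
    deriv ψp 0 = deriv ψm 0 ∧
    (∀ y ∈ Ioo (-1:ℝ) 0, VertODE ρm μm B ξ lam ψm y) ∧
    (∀ y ∈ Ioo (0:ℝ) 1, VertODE ρp μp B ξ lam ψp y) ∧
    (μp * lam * (ξ ^ 2 * ψp 0 + iteratedDeriv 2 ψp 0) + B ^ 2 * iteratedDeriv 2 ψp 0) -
        (μm * lam * (ξ ^ 2 * ψm 0 + iteratedDeriv 2 ψm 0) + B ^ 2 * iteratedDeriv 2 ψm 0) = 0 ∧
    (μp * lam * (iteratedDeriv 3 ψp 0 - 3 * ξ ^ 2 * deriv ψp 0) + B ^ 2 * iteratedDeriv 3 ψp 0) -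
        (μm * lam * (iteratedDeriv 3 ψm 0 - 3 * ξ ^ 2 * deriv ψm 0) + B ^ 2 * iteratedDeriv 3 ψm 0) =
      lam ^ 2 * (ρp * deriv ψp 0 - ρm * deriv ψm 0) + g * (ρp - ρm) * ξ ^ 2 * ψ 0 ∧
    ψ (-1) = 0 ∧ ψ 1 = 0 ∧ deriv ψm (-1) = 0 ∧ deriv ψp 1 = 0

/-- `ψ : [-1,1] → ℝ` solves the horizontal problem at frequency `ξ` with growth rate `lam`. -/
def IsHorizSol (ρp ρm μp μm g B ξ lam : ℝ) (n : ℕ∞) (ψ : ℝ → ℝ) : Prop :=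
  ∃ ψm ψp : ℝ → ℝ,
    ContDiff ℝ n ψm ∧ ContDiff ℝ n ψp ∧
    (∀ y ∈ Icc (-1:ℝ) 0, ψ y = ψm y) ∧
    (∀ y ∈ Icc (0:ℝ) 1, ψ y = ψp y) ∧
    ψp 0 = ψm 0 ∧
    deriv ψp 0 = deriv ψm 0 ∧
    (∀ y ∈ Ioo (-1:ℝ) 0, HorizODE ρm μm B ξ lam ψm y) ∧
    (∀ y ∈ Ioo (0:ℝ) 1, HorizODE ρp μp B ξ lam ψp y) ∧
    μp * lam * (ξ ^ 2 * ψp 0 + iteratedDeriv 2 ψp 0) -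
        μm * lam * (ξ ^ 2 * ψm 0 + iteratedDeriv 2 ψm 0) = 0 ∧
    μp * lam * (iteratedDeriv 3 ψp 0 - 3 * ξ ^ 2 * deriv ψp 0) -
        μm * lam * (iteratedDeriv 3 ψm 0 - 3 * ξ ^ 2 * deriv ψm 0) =
      lam ^ 2 * (ρp * deriv ψp 0 - ρm * deriv ψm 0) + g * (ρp - ρm) * ξ ^ 2 * ψ 0 ∧
    ψ (-1) = 0 ∧ ψ 1 = 0 ∧ deriv ψm (-1) = 0 ∧ deriv ψp 1 = 0


section Helpers
open intervalIntegral

section helpers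
variable {f : ℝ → ℝ}

lemma cd_cont_id (hf : ContDiff ℝ 4 f) (k : ℕ) (hk : k ≤ 4) : Continuous (iteratedDeriv k f) :=
  hf.continuous_iteratedDeriv k (by exact_mod_cast Nat.cast_le.mpr hk)

lemma cd_hasDerivAt (hf : ContDiff ℝ 4 f) (k : ℕ) (hk : k < 4) (y : ℝ) :
    HasDerivAt (iteratedDeriv k f) (iteratedDeriv (k+1) f y) y := by
  have hdiff : Differentiable ℝ (iteratedDeriv k f) :=
    hf.differentiable_iteratedDeriv k (by exact_mod_cast Nat.cast_lt.mpr hk)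
  have h2 : iteratedDeriv (k+1) f y = deriv (iteratedDeriv k f) y := by
    rw [iteratedDeriv_succ]
  rw [h2]
  exact (hdiff y).hasDerivAt

lemma it1 : iteratedDeriv 1 f = deriv f := iteratedDeriv_one

lemma integral_congr_Ioo {a b : ℝ} (hab : a ≤ b) {u v : ℝ → ℝ}
    (h : ∀ y ∈ Ioo a b, u y = v y) :
    ∫ y in a..b, u y = ∫ y in a..b, v y := by
  rw [intervalIntegral.integral_of_le hab, intervalIntegral.integral_of_le hab,
    MeasureTheory.integral_Ioc_eq_integral_Ioo, MeasureTheory.integral_Ioc_eq_integral_Ioo]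
  exact setIntegral_congr_fun measurableSet_Ioo h

end helpers

section ibp
variable {f : ℝ → ℝ}

lemma ibp (hf : ContDiff ℝ 4 f) {k j : ℕ} (hk : k < 4) (hj : j < 4) (a b : ℝ) :
    ∫ y in a..b, iteratedDeriv (k+1) f y * iteratedDeriv j f y
      = iteratedDeriv k f b * iteratedDeriv j f b - iteratedDeriv k f a * iteratedDeriv j f a
        - ∫ y in a..b, iteratedDeriv k f y * iteratedDeriv (j+1) f y := by
  have h1 : IntervalIntegrable (fun y => iteratedDeriv (k+1) f y * iteratedDeriv j f y)
      volume a b :=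
    ((cd_cont_id hf (k+1) (by omega)).mul (cd_cont_id hf j (by omega))).intervalIntegrable _ _
  have h2 : IntervalIntegrable (fun y => iteratedDeriv k f y * iteratedDeriv (j+1) f y)
      volume a b :=
    ((cd_cont_id hf k (by omega)).mul (cd_cont_id hf (j+1) (by omega))).intervalIntegrable _ _
  have hsum := intervalIntegral.integral_deriv_mul_eq_sub (a := a) (b := b)
    (u := iteratedDeriv k f) (v := iteratedDeriv j f)
    (u' := fun y => iteratedDeriv (k+1) f y) (v' := fun y => iteratedDeriv (j+1) f y)
    (fun x _ => cd_hasDerivAt hf k hk x) (fun x _ => cd_hasDerivAt hf j hj x)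
    ((cd_cont_id hf (k+1) (by omega)).intervalIntegrable _ _)
    ((cd_cont_id hf (j+1) (by omega)).intervalIntegrable _ _)
  rw [intervalIntegral.integral_add h1 h2] at hsum
  linarith

end ibp

section pos

lemma integral_sq_pos {f : ℝ → ℝ} (hf : Continuous f) {a b c : ℝ} (hab : a < b)
    (hca : a ≤ c) (hcb : c ≤ b) (hfc : f c ≠ 0) : 0 < ∫ y in a..b, (f y)^2 := by
  have hopen : IsOpen {x : ℝ | 0 < (f x)^2} := by
    have : Continuous fun x => (f x)^2 := hf.pow 2
    exact isOpen_lt continuous_const this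
  have hcmem : c ∈ {x : ℝ | 0 < (f x)^2} := by
    simp only [mem_setOf_eq]
    positivity
  obtain ⟨ε, hε, hball⟩ := Metric.isOpen_iff.mp hopen c hcmem
  set ε' : ℝ := min (ε/2) (b - a) with hε'def
  have hε' : 0 < ε' := lt_min (by linarith) (by linarith)
  set u : ℝ := max a (c - ε') with hu
  set v : ℝ := min b (c + ε') with hv
  have hau : a ≤ u := le_max_left _ _
  have hvb : v ≤ b := min_le_left _ _
  have huv : u < v := by
    rw [hu, hv]
    apply max_lt <;> [skip; skip] <;> apply lt_min
    · exact hab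
    · linarith
    · linarith
    · linarith
  have hsub : ∀ x ∈ Ioo u v, 0 < (f x)^2 := by
    intro x hx
    apply hball
    have h1 : c - ε' < x := lt_of_le_of_lt (le_max_right _ _) hx.1
    have h2 : x < c + ε' := lt_of_lt_of_le hx.2 (min_le_right _ _)
    have : |x - c| < ε' := abs_sub_lt_iff.mpr ⟨by linarith, by linarith⟩
    have hee : ε' ≤ ε / 2 := min_le_left _ _
    simp only [Metric.mem_ball, Real.dist_eq]
    linarith
  have hint : ∀ p q : ℝ, IntervalIntegrable (fun y => (f y)^2) volume p q :=
    fun p q => ((hf.pow 2).intervalIntegrable p q)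
  have hmid : 0 < ∫ y in u..v, (f y)^2 :=
    intervalIntegral_pos_of_pos_on (hint u v) hsub huv
  have h1 : 0 ≤ ∫ y in a..u, (f y)^2 :=
    intervalIntegral.integral_nonneg hau (fun x _ => sq_nonneg _)
  have h2 : 0 ≤ ∫ y in v..b, (f y)^2 :=
    intervalIntegral.integral_nonneg hvb (fun x _ => sq_nonneg _)
  have hsplit1 := intervalIntegral.integral_add_adjacent_intervals (hint a u) (hint u v)
  have hsplit2 := intervalIntegral.integral_add_adjacent_intervals (hint a v) (hint v b)
  linarith [hsplit1, hsplit2]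

end pos

section piece
variable {f : ℝ → ℝ}

lemma piece (ρ μ B ξ lam : ℝ) {f : ℝ → ℝ} (hf : ContDiff ℝ 4 f) {a b : ℝ} (hab : a ≤ b)
    (hode : ∀ y ∈ Ioo a b, VertODE ρ μ B ξ lam f y) :
    -lam^2*ρ*(ξ^2*(∫ y in a..b, (f y)^2)
        - (deriv f b * f b - deriv f a * f a - ∫ y in a..b, (deriv f y)^2)) =
      μ*lam*(ξ^4*(∫ y in a..b, (f y)^2)
        - 2*ξ^2*(deriv f b * f b - deriv f a * f a - ∫ y in a..b, (deriv f y)^2)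
        + (iteratedDeriv 3 f b * f b - iteratedDeriv 3 f a * f a
            - (iteratedDeriv 2 f b * deriv f b - iteratedDeriv 2 f a * deriv f a)
            + ∫ y in a..b, (iteratedDeriv 2 f y)^2))
      + B^2*(-(ξ^2)*(deriv f b * f b - deriv f a * f a - ∫ y in a..b, (deriv f y)^2)
        + (iteratedDeriv 3 f b * f b - iteratedDeriv 3 f a * f a
            - (iteratedDeriv 2 f b * deriv f b - iteratedDeriv 2 f a * deriv f a)
            + ∫ y in a..b, (iteratedDeriv 2 f y)^2)) := by
  have c0 : Continuous f := hf.continuous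
  have c1 : Continuous (deriv f) := by
    have := cd_cont_id hf 1 (by omega); rwa [iteratedDeriv_one] at this
  have c2 : Continuous (iteratedDeriv 2 f) := cd_cont_id hf 2 (by omega)
  have c3 : Continuous (iteratedDeriv 3 f) := cd_cont_id hf 3 (by omega)
  have c4 : Continuous (iteratedDeriv 4 f) := cd_cont_id hf 4 (by omega)
  -- integrability
  have i00 : IntervalIntegrable (fun y => (f y)^2) volume a b :=
    ((c0.pow 2).intervalIntegrable _ _)
  have i20 : IntervalIntegrable (fun y => iteratedDeriv 2 f y * f y) volume a b :=
    ((c2.mul c0).intervalIntegrable _ _)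
  have i40 : IntervalIntegrable (fun y => iteratedDeriv 4 f y * f y) volume a b :=
    ((c4.mul c0).intervalIntegrable _ _)
  -- step 0 : integral equality from the ODE
  have h0 : (∫ y in a..b, (-lam ^ 2 * ρ * (ξ ^ 2 * f y - iteratedDeriv 2 f y)) * f y)
      = ∫ y in a..b,
          (μ * lam * (ξ ^ 4 * f y - 2 * ξ ^ 2 * iteratedDeriv 2 f y + iteratedDeriv 4 f y) +
            B ^ 2 * (-(ξ ^ 2) * iteratedDeriv 2 f y + iteratedDeriv 4 f y)) * f y := by
    apply integral_congr_Ioo hab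
    intro y hy
    have h := hode y hy
    unfold VertODE at h
    rw [h]
  -- expand LHS
  have hL : (∫ y in a..b, (-lam ^ 2 * ρ * (ξ ^ 2 * f y - iteratedDeriv 2 f y)) * f y)
      = (-lam^2*ρ*ξ^2) * (∫ y in a..b, (f y)^2)
        + (lam^2*ρ) * (∫ y in a..b, iteratedDeriv 2 f y * f y) := by
    rw [← intervalIntegral.integral_const_mul, ← intervalIntegral.integral_const_mul,
      ← intervalIntegral.integral_add (i00.const_mul _) (i20.const_mul _)]
    apply intervalIntegral.integral_congr
    intro y _
    ring
  -- expand RHS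
  have hR : (∫ y in a..b,
          (μ * lam * (ξ ^ 4 * f y - 2 * ξ ^ 2 * iteratedDeriv 2 f y + iteratedDeriv 4 f y) +
            B ^ 2 * (-(ξ ^ 2) * iteratedDeriv 2 f y + iteratedDeriv 4 f y)) * f y)
      = (μ*lam*ξ^4) * (∫ y in a..b, (f y)^2)
        + (-(2*μ*lam*ξ^2) - B^2*ξ^2) * (∫ y in a..b, iteratedDeriv 2 f y * f y)
        + (μ*lam + B^2) * (∫ y in a..b, iteratedDeriv 4 f y * f y) := by
    rw [← intervalIntegral.integral_const_mul, ← intervalIntegral.integral_const_mul,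
      ← intervalIntegral.integral_const_mul,
      ← intervalIntegral.integral_add (i00.const_mul _) (i20.const_mul _),
      ← intervalIntegral.integral_add ((i00.const_mul _).add (i20.const_mul _)) (i40.const_mul _)]
    apply intervalIntegral.integral_congr
    intro y _
    ring
  -- integration by parts identities
  have hW2 : (∫ y in a..b, iteratedDeriv 2 f y * f y)
      = deriv f b * f b - deriv f a * f a - ∫ y in a..b, (deriv f y)^2 := by
    have h := ibp hf (k := 1) (j := 0) (by omega) (by omega) a b
    norm_num [iteratedDeriv_zero, iteratedDeriv_one] at h
    rw [h]
    congr 1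
    apply integral_congr_Ioo hab
    intro y _
    ring
  have hW31 : (∫ y in a..b, iteratedDeriv 3 f y * deriv f y)
      = iteratedDeriv 2 f b * deriv f b - iteratedDeriv 2 f a * deriv f a
        - ∫ y in a..b, (iteratedDeriv 2 f y)^2 := by
    have h := ibp hf (k := 2) (j := 1) (by omega) (by omega) a b
    norm_num [iteratedDeriv_one] at h
    rw [h]
    congr 1
    apply integral_congr_Ioo hab
    intro y _
    ring
  have hW4 : (∫ y in a..b, iteratedDeriv 4 f y * f y)
      = iteratedDeriv 3 f b * f b - iteratedDeriv 3 f a * f a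
        - (iteratedDeriv 2 f b * deriv f b - iteratedDeriv 2 f a * deriv f a
            - ∫ y in a..b, (iteratedDeriv 2 f y)^2) := by
    have h := ibp hf (k := 3) (j := 0) (by omega) (by omega) a b
    norm_num [iteratedDeriv_zero, iteratedDeriv_one] at h
    rw [h, hW31]
  rw [hL, hR, hW2, hW4] at h0
  linear_combination h0

end piece

section ediss

lemma ibp20' {f : ℝ → ℝ} (hf : ContDiff ℝ 4 f) {a b : ℝ} (hab : a ≤ b) :
    (∫ y in a..b, iteratedDeriv 2 f y * f y)
      = deriv f b * f b - deriv f a * f a - ∫ y in a..b, (deriv f y)^2 := by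
  have h := ibp hf (k := 1) (j := 0) (by omega) (by omega) a b
  norm_num [iteratedDeriv_zero, iteratedDeriv_one] at h
  rw [h]
  congr 1
  apply integral_congr_Ioo hab
  intro y _
  ring

lemma Edef {f : ℝ → ℝ} (hf : ContDiff ℝ 4 f) (ξ : ℝ) {a b : ℝ} (hab : a ≤ b) :
    (∫ y in a..b, ((iteratedDeriv 2 f y + ξ^2 * f y)^2 + 4*ξ^2*(deriv f y)^2))
      = (∫ y in a..b, (iteratedDeriv 2 f y)^2)
        + 2*ξ^2*(deriv f b * f b - deriv f a * f a - ∫ y in a..b, (deriv f y)^2)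
        + ξ^4*(∫ y in a..b, (f y)^2)
        + (4*ξ^2)*(∫ y in a..b, (deriv f y)^2) := by
  have c0 : Continuous f := hf.continuous
  have c1 : Continuous (deriv f) := by
    have := cd_cont_id hf 1 (by omega); rwa [iteratedDeriv_one] at this
  have c2 : Continuous (iteratedDeriv 2 f) := cd_cont_id hf 2 (by omega)
  have i22 : IntervalIntegrable (fun y => (iteratedDeriv 2 f y)^2) volume a b :=
    ((c2.pow 2).intervalIntegrable _ _)
  have i20 : IntervalIntegrable (fun y => iteratedDeriv 2 f y * f y) volume a b :=
    ((c2.mul c0).intervalIntegrable _ _)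
  have i00 : IntervalIntegrable (fun y => (f y)^2) volume a b :=
    ((c0.pow 2).intervalIntegrable _ _)
  have i11 : IntervalIntegrable (fun y => (deriv f y)^2) volume a b :=
    ((c1.pow 2).intervalIntegrable _ _)
  have hexp : (∫ y in a..b, ((iteratedDeriv 2 f y + ξ^2 * f y)^2 + 4*ξ^2*(deriv f y)^2))
      = (∫ y in a..b, (iteratedDeriv 2 f y)^2)
        + (2*ξ^2) * (∫ y in a..b, iteratedDeriv 2 f y * f y)
        + ξ^4*(∫ y in a..b, (f y)^2)
        + (4*ξ^2)*(∫ y in a..b, (deriv f y)^2) := by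
    rw [← intervalIntegral.integral_const_mul (2*ξ^2),
      ← intervalIntegral.integral_const_mul (ξ^4),
      ← intervalIntegral.integral_const_mul (4*ξ^2),
      ← intervalIntegral.integral_add i22 (i20.const_mul _),
      ← intervalIntegral.integral_add (i22.add (i20.const_mul _)) (i00.const_mul _),
      ← intervalIntegral.integral_add ((i22.add (i20.const_mul _)).add (i00.const_mul _))
        (i11.const_mul _)]
    apply intervalIntegral.integral_congr
    intro y _
    ring
  rw [hexp, ibp20' hf hab]

end ediss


-- derivative facts for smoothTransition
lemma theta_hasDeriv1 (t : ℝ) :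
    HasDerivAt Real.smoothTransition (deriv Real.smoothTransition t) t :=
  ((Real.smoothTransition.contDiff (n := 1)).differentiable (by norm_num) t).hasDerivAt

lemma theta_hasDeriv2 (t : ℝ) :
    HasDerivAt (deriv Real.smoothTransition) (deriv (deriv Real.smoothTransition) t) t := by
  have h4 : ContDiff ℝ 4 Real.smoothTransition := Real.smoothTransition.contDiff
  have hd : Differentiable ℝ (iteratedDeriv 1 Real.smoothTransition) :=
    h4.differentiable_iteratedDeriv 1 (by norm_num)
  rw [iteratedDeriv_one] at hd
  exact (hd t).hasDerivAt

lemma theta_cont1 : Continuous (deriv Real.smoothTransition) := by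
  have h4 : ContDiff ℝ 4 Real.smoothTransition := Real.smoothTransition.contDiff
  have := h4.continuous_iteratedDeriv 1 (by norm_num)
  rwa [iteratedDeriv_one] at this

lemma theta_cont2 : Continuous (deriv (deriv Real.smoothTransition)) := by
  have h4 : ContDiff ℝ 4 Real.smoothTransition := Real.smoothTransition.contDiff
  have := h4.continuous_iteratedDeriv 2 (by norm_num)
  rwa [iteratedDeriv_succ, iteratedDeriv_one] at this

lemma bound_on_Icc {f : ℝ → ℝ} (hf : Continuous f) (a b : ℝ) :
    ∃ C, 0 ≤ C ∧ ∀ x ∈ Icc a b, |f x| ≤ C := by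
  obtain ⟨C, hC⟩ :=
    (isCompact_Icc (a := a) (b := b)).exists_bound_of_continuousOn hf.continuousOn
  refine ⟨max C 0, le_max_right _ _, fun x hx => ?_⟩
  have := hC x hx
  rw [Real.norm_eq_abs] at this
  exact this.trans (le_max_left _ _)

lemma integral_congr_Ioo' {a b : ℝ} (hab : a ≤ b) {u v : ℝ → ℝ}
    (h : ∀ y ∈ Ioo a b, u y = v y) :
    ∫ y in a..b, u y = ∫ y in a..b, v y := by
  rw [intervalIntegral.integral_of_le hab, intervalIntegral.integral_of_le hab,
    MeasureTheory.integral_Ioc_eq_integral_Ioo, MeasureTheory.integral_Ioc_eq_integral_Ioo]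
  exact setIntegral_congr_fun measurableSet_Ioo h


lemma corrector (ψm ψp : ℝ → ℝ) (hψm : ContDiff ℝ 4 ψm) (hψp : ContDiff ℝ 4 ψp)
    (hval : ψp 0 = ψm 0) (hder : deriv ψp 0 = deriv ψm 0) :
    ∃ K1 K2 : ℝ, 0 ≤ K1 ∧ 0 ≤ K2 ∧ ∀ ε : ℝ, 0 < ε → ε ≤ 1/2 →
      ∃ φ : ℝ → ℝ, ContDiff ℝ 2 φ ∧
        (∀ y ≤ (0:ℝ), φ y = ψm y) ∧ (∀ y, ε ≤ y → φ y = ψp y) ∧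
        deriv φ (-1) = deriv ψm (-1) ∧ deriv φ 1 = deriv ψp 1 ∧
        (∫ y in (-1:ℝ)..1, (deriv φ y)^2)
          ≤ (∫ y in (-1:ℝ)..0, (deriv ψm y)^2) + (∫ y in (0:ℝ)..1, (deriv ψp y)^2) + K1 * ε ∧
        (∫ y in (-1:ℝ)..1, (deriv (deriv φ) y)^2)
          ≤ (∫ y in (-1:ℝ)..0, (iteratedDeriv 2 ψm y)^2)
            + (∫ y in (0:ℝ)..1, (iteratedDeriv 2 ψp y)^2) + K2 * ε := by
  set θ := Real.smoothTransition with hθdef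
  -- the difference and its derivatives
  set d0 : ℝ → ℝ := fun y => ψp y - ψm y with hd0
  set d1 : ℝ → ℝ := fun y => deriv ψp y - deriv ψm y with hd1
  set d2 : ℝ → ℝ := fun y => deriv (deriv ψp) y - deriv (deriv ψm) y with hd2
  have hdiffm : Differentiable ℝ ψm := hψm.differentiable (by norm_num)
  have hdiffp : Differentiable ℝ ψp := hψp.differentiable (by norm_num)
  have hdiffm1 : Differentiable ℝ (deriv ψm) := by
    have := hψm.differentiable_iteratedDeriv 1 (by norm_num)
    rwa [iteratedDeriv_one] at this
  have hdiffp1 : Differentiable ℝ (deriv ψp) := by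
    have := hψp.differentiable_iteratedDeriv 1 (by norm_num)
    rwa [iteratedDeriv_one] at this
  have hcm1 : Continuous (deriv ψm) := hdiffm1.continuous
  have hcp1 : Continuous (deriv ψp) := hdiffp1.continuous
  have hcm2 : Continuous (deriv (deriv ψm)) := by
    have := hψm.continuous_iteratedDeriv 2 (by norm_num)
    rwa [iteratedDeriv_succ, iteratedDeriv_one] at this
  have hcp2 : Continuous (deriv (deriv ψp)) := by
    have := hψp.continuous_iteratedDeriv 2 (by norm_num)
    rwa [iteratedDeriv_succ, iteratedDeriv_one] at this
  have hd0D : ∀ y, HasDerivAt d0 (d1 y) y := fun y =>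
    ((hdiffp y).hasDerivAt.sub (hdiffm y).hasDerivAt)
  have hd1D : ∀ y, HasDerivAt d1 (d2 y) y := fun y =>
    ((hdiffp1 y).hasDerivAt.sub (hdiffm1 y).hasDerivAt)
  have hd10 : d1 0 = 0 := by simp [hd1, hder]
  have hd00 : d0 0 = 0 := by simp [hd0, hval]
  -- bounds
  obtain ⟨M2, hM2n, hM2⟩ := bound_on_Icc (hcp2.sub hcm2) 0 1
  obtain ⟨C1, hC1n, hC1⟩ := bound_on_Icc hcm1 0 1
  obtain ⟨C2, hC2n, hC2⟩ := bound_on_Icc hcm2 0 1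
  obtain ⟨T1, hT1n, hT1⟩ := bound_on_Icc theta_cont1 0 1
  obtain ⟨T2, hT2n, hT2⟩ := bound_on_Icc theta_cont2 0 1
  refine ⟨(C1 + M2 + M2*T1)^2, (C2 + M2 + 2*M2*T1 + M2*T2)^2, sq_nonneg _, sq_nonneg _, ?_⟩
  intro ε hε hε2
  set G1 : ℝ := C1 + M2 + M2*T1 with hG1def
  set G2 : ℝ := C2 + M2 + 2*M2*T1 + M2*T2 with hG2def
  -- the corrector function
  set φ : ℝ → ℝ := fun y => ψm y + d0 y * θ (y/ε) with hφdef
  have hθ4 : ContDiff ℝ 4 θ := Real.smoothTransition.contDiff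
  have hφC : ContDiff ℝ 4 φ := by
    apply hψm.add
    exact (hψp.sub hψm).mul (hθ4.comp (contDiff_id.div_const ε))
  -- equality with ψm on the left
  have hm : ∀ y ≤ (0:ℝ), φ y = ψm y := by
    intro y hy
    have : θ (y/ε) = 0 :=
      Real.smoothTransition.zero_of_nonpos (div_nonpos_of_nonpos_of_nonneg hy hε.le)
    simp [hφdef, this]
  have hp : ∀ y, ε ≤ y → φ y = ψp y := by
    intro y hy
    have : θ (y/ε) = 1 :=
      Real.smoothTransition.one_of_one_le ((one_le_div hε).mpr hy)
    simp [hφdef, this, hd0]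
  -- derivative at the boundary points
  have hdm : ∀ y < (0:ℝ), deriv φ y = deriv ψm y := by
    intro y hy
    apply Filter.EventuallyEq.deriv_eq
    exact eventually_of_mem (Iio_mem_nhds hy) (fun x hx => hm x (le_of_lt hx))
  have hdp : ∀ y, ε < y → deriv φ y = deriv ψp y := by
    intro y hy
    apply Filter.EventuallyEq.deriv_eq
    exact eventually_of_mem (Ioi_mem_nhds hy) (fun x hx => hp x (le_of_lt hx))
  have hddm : ∀ y < (0:ℝ), deriv (deriv φ) y = deriv (deriv ψm) y := by
    intro y hy
    apply Filter.EventuallyEq.deriv_eq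
    exact eventually_of_mem (Iio_mem_nhds hy) (fun x hx => hdm x hx)
  have hddp : ∀ y, ε < y → deriv (deriv φ) y = deriv (deriv ψp) y := by
    intro y hy
    apply Filter.EventuallyEq.deriv_eq
    exact eventually_of_mem (Ioi_mem_nhds hy) (fun x hx => hdp x hx)
  -- global derivative formulas
  have hinner : ∀ y : ℝ, HasDerivAt (fun x : ℝ => x/ε) (1/ε) y := by
    intro y
    simpa using (hasDerivAt_id y).div_const ε
  have hθεD : ∀ y : ℝ, HasDerivAt (fun x => θ (x/ε)) (deriv θ (y/ε) * (1/ε)) y := by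
    intro y
    exact (theta_hasDeriv1 (y/ε)).comp y (hinner y)
  have hθ'εD : ∀ y : ℝ, HasDerivAt (fun x => deriv θ (x/ε) * (1/ε))
      (deriv (deriv θ) (y/ε) * (1/ε) * (1/ε)) y := by
    intro y
    exact ((theta_hasDeriv2 (y/ε)).comp y (hinner y)).mul_const (1/ε)
  set g1 : ℝ → ℝ := fun y => deriv ψm y + (d1 y * θ (y/ε) + d0 y * (deriv θ (y/ε) * (1/ε)))
    with hg1def
  have hφD : ∀ y, HasDerivAt φ (g1 y) y := by
    intro y
    exact (hdiffm y).hasDerivAt.add ((hd0D y).mul (hθεD y))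
  have hφd_eq : deriv φ = g1 := funext fun y => (hφD y).deriv
  set g2 : ℝ → ℝ := fun y => deriv (deriv ψm) y +
      ((d2 y * θ (y/ε) + d1 y * (deriv θ (y/ε) * (1/ε))) +
        (d1 y * (deriv θ (y/ε) * (1/ε)) + d0 y * (deriv (deriv θ) (y/ε) * (1/ε) * (1/ε))))
    with hg2def
  have hg1D : ∀ y, HasDerivAt g1 (g2 y) y := by
    intro y
    exact (hdiffm1 y).hasDerivAt.add
      (((hd1D y).mul (hθεD y)).add ((hd0D y).mul (hθ'εD y)))
  have hφdd_eq : deriv (deriv φ) = g2 := by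
    rw [hφd_eq]
    exact funext fun y => (hg1D y).deriv
  -- continuity
  have cθε : Continuous (fun x : ℝ => θ (x/ε)) :=
    Real.smoothTransition.continuous.comp (continuous_id.div_const ε)
  have cθ'ε : Continuous (fun x : ℝ => deriv θ (x/ε)) :=
    theta_cont1.comp (continuous_id.div_const ε)
  have cθ''ε : Continuous (fun x : ℝ => deriv (deriv θ) (x/ε)) :=
    theta_cont2.comp (continuous_id.div_const ε)
  have cd0 : Continuous d0 := hdiffp.continuous.sub hdiffm.continuous
  have cd1 : Continuous d1 := hcp1.sub hcm1
  have cd2 : Continuous d2 := hcp2.sub hcm2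
  have cg1 : Continuous g1 :=
    hcm1.add ((cd1.mul cθε).add (cd0.mul (cθ'ε.mul continuous_const)))
  have cg2 : Continuous g2 :=
    hcm2.add (((cd2.mul cθε).add (cd1.mul (cθ'ε.mul continuous_const))).add
      ((cd1.mul (cθ'ε.mul continuous_const)).add
        (cd0.mul ((cθ''ε.mul continuous_const).mul continuous_const))))
  -- MVT bounds
  have hb1 : ∀ y ∈ Icc (0:ℝ) ε, |d1 y| ≤ M2 * y := by
    intro y hy
    have hy01 : y ∈ Icc (0:ℝ) 1 := ⟨hy.1, le_trans hy.2 (by linarith)⟩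
    have key := (convex_Icc (0:ℝ) 1).norm_image_sub_le_of_norm_hasDerivWithin_le
      (f := d1) (f' := d2) (fun x _ => (hd1D x).hasDerivWithinAt)
      (fun x hx => by rw [Real.norm_eq_abs]; exact hM2 x hx)
      (left_mem_Icc.mpr zero_le_one) hy01
    rw [hd10, sub_zero, sub_zero, Real.norm_eq_abs, Real.norm_eq_abs,
      abs_of_nonneg hy.1] at key
    exact key
  have hb0 : ∀ y ∈ Icc (0:ℝ) ε, |d0 y| ≤ (M2 * ε) * y := by
    intro y hy
    have key := (convex_Icc (0:ℝ) ε).norm_image_sub_le_of_norm_hasDerivWithin_le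
      (f := d0) (f' := d1) (fun x _ => (hd0D x).hasDerivWithinAt)
      (fun x hx => by
        rw [Real.norm_eq_abs]
        exact le_trans (hb1 x hx) (mul_le_mul_of_nonneg_left hx.2 hM2n))
      (left_mem_Icc.mpr hε.le) hy
    rw [hd00, sub_zero, sub_zero, Real.norm_eq_abs, Real.norm_eq_abs,
      abs_of_nonneg hy.1] at key
    exact key
  -- pointwise bounds on [0, ε]
  have hθb : ∀ t : ℝ, |θ t| ≤ 1 := fun t =>
    abs_le.mpr ⟨by linarith [Real.smoothTransition.nonneg t], Real.smoothTransition.le_one t⟩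
  have hytε : ∀ y ∈ Icc (0:ℝ) ε, y/ε ∈ Icc (0:ℝ) 1 := by
    intro y hy
    exact ⟨div_nonneg hy.1 hε.le, (div_le_one hε).mpr hy.2⟩
  have hg1b : ∀ y ∈ Icc (0:ℝ) ε, |g1 y| ≤ G1 := by
    intro y hy
    have hy01 : y ∈ Icc (0:ℝ) 1 := ⟨hy.1, le_trans hy.2 (by linarith)⟩
    have t1 : |deriv ψm y| ≤ C1 := hC1 y hy01
    have t2 : |d1 y * θ (y/ε)| ≤ M2 := by
      rw [abs_mul]
      calc |d1 y| * |θ (y/ε)| ≤ (M2 * y) * 1 :=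
            mul_le_mul (hb1 y hy) (hθb _) (abs_nonneg _) (mul_nonneg hM2n hy.1)
        _ = M2 * y := by ring
        _ ≤ M2 * 1 := by
            apply mul_le_mul_of_nonneg_left _ hM2n
            exact le_trans hy.2 (by linarith)
        _ = M2 := by ring
    have t3 : |d0 y * (deriv θ (y/ε) * (1/ε))| ≤ M2 * T1 := by
      rw [abs_mul, abs_mul]
      have h1 : |d0 y| ≤ M2 * ε * y := hb0 y hy
      have h2 : |deriv θ (y/ε)| ≤ T1 := hT1 _ (hytε y hy)
      have h3 : |1/ε| = 1/ε := abs_of_pos (by positivity)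
      rw [h3]
      calc |d0 y| * (|deriv θ (y/ε)| * (1/ε)) ≤ (M2 * ε * y) * (T1 * (1/ε)) := by
            apply mul_le_mul h1 _ (by positivity) (mul_nonneg (mul_nonneg hM2n hε.le) hy.1)
            exact mul_le_mul_of_nonneg_right h2 (by positivity)
        _ = M2 * T1 * y := by field_simp
        _ ≤ M2 * T1 * 1 := by
            apply mul_le_mul_of_nonneg_left _ (by positivity)
            exact le_trans hy.2 (by linarith)
        _ = M2 * T1 := by ring
    calc |g1 y| ≤ |deriv ψm y| + |d1 y * θ (y/ε) + d0 y * (deriv θ (y/ε) * (1/ε))| :=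
          abs_add_le _ _
      _ ≤ |deriv ψm y| + (|d1 y * θ (y/ε)| + |d0 y * (deriv θ (y/ε) * (1/ε))|) := by
          linarith [abs_add_le (d1 y * θ (y/ε)) (d0 y * (deriv θ (y/ε) * (1/ε)))]
      _ ≤ C1 + (M2 + M2 * T1) := by linarith
      _ = G1 := by rw [hG1def]; ring
  have hg2b : ∀ y ∈ Icc (0:ℝ) ε, |g2 y| ≤ G2 := by
    intro y hy
    have hy01 : y ∈ Icc (0:ℝ) 1 := ⟨hy.1, le_trans hy.2 (by linarith)⟩
    have t1 : |deriv (deriv ψm) y| ≤ C2 := hC2 y hy01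
    have t2 : |d2 y * θ (y/ε)| ≤ M2 := by
      rw [abs_mul]
      calc |d2 y| * |θ (y/ε)| ≤ M2 * 1 :=
            mul_le_mul (hM2 y hy01) (hθb _) (abs_nonneg _) hM2n
        _ = M2 := by ring
    have t3 : |d1 y * (deriv θ (y/ε) * (1/ε))| ≤ M2 * T1 := by
      rw [abs_mul, abs_mul]
      have h2 : |deriv θ (y/ε)| ≤ T1 := hT1 _ (hytε y hy)
      have h3 : |1/ε| = 1/ε := abs_of_pos (by positivity)
      rw [h3]
      calc |d1 y| * (|deriv θ (y/ε)| * (1/ε)) ≤ (M2 * y) * (T1 * (1/ε)) := by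
            apply mul_le_mul (hb1 y hy) _ (by positivity) (mul_nonneg hM2n hy.1)
            exact mul_le_mul_of_nonneg_right h2 (by positivity)
        _ = M2 * T1 * (y / ε) := by ring
        _ ≤ M2 * T1 * 1 := by
            apply mul_le_mul_of_nonneg_left ((div_le_one hε).mpr hy.2) (by positivity)
        _ = M2 * T1 := by ring
    have t4 : |d0 y * (deriv (deriv θ) (y/ε) * (1/ε) * (1/ε))| ≤ M2 * T2 := by
      rw [abs_mul, abs_mul, abs_mul]
      have h2 : |deriv (deriv θ) (y/ε)| ≤ T2 := hT2 _ (hytε y hy)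
      have h3 : |1/ε| = 1/ε := abs_of_pos (by positivity)
      rw [h3]
      calc |d0 y| * (|deriv (deriv θ) (y/ε)| * (1/ε) * (1/ε))
          ≤ (M2 * ε * y) * (T2 * (1/ε) * (1/ε)) := by
            apply mul_le_mul (hb0 y hy) _ (by positivity) (mul_nonneg (mul_nonneg hM2n hε.le) hy.1)
            apply mul_le_mul_of_nonneg_right _ (by positivity)
            exact mul_le_mul_of_nonneg_right h2 (by positivity)
        _ = M2 * T2 * (y / ε) := by field_simp
        _ ≤ M2 * T2 * 1 := by
            apply mul_le_mul_of_nonneg_left ((div_le_one hε).mpr hy.2) (by positivity)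
        _ = M2 * T2 := by ring
    calc |g2 y| ≤ |deriv (deriv ψm) y| +
          |(d2 y * θ (y/ε) + d1 y * (deriv θ (y/ε) * (1/ε))) +
            (d1 y * (deriv θ (y/ε) * (1/ε)) + d0 y * (deriv (deriv θ) (y/ε) * (1/ε) * (1/ε)))| :=
          abs_add_le _ _
      _ ≤ C2 + (M2 + M2*T1 + (M2*T1 + M2*T2)) := by
          have a1 := abs_add_le (d2 y * θ (y/ε) + d1 y * (deriv θ (y/ε) * (1/ε)))
            (d1 y * (deriv θ (y/ε) * (1/ε)) + d0 y * (deriv (deriv θ) (y/ε) * (1/ε) * (1/ε)))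
          have a2 := abs_add_le (d2 y * θ (y/ε)) (d1 y * (deriv θ (y/ε) * (1/ε)))
          have a3 := abs_add_le (d1 y * (deriv θ (y/ε) * (1/ε)))
            (d0 y * (deriv (deriv θ) (y/ε) * (1/ε) * (1/ε)))
          linarith
      _ = G2 := by rw [hG2def]; ring
  -- integral bounds
  have int1 : ∀ (p q : ℝ) (h : Continuous (fun y => (g1 y)^2)),
    IntervalIntegrable (fun y => (g1 y)^2) volume p q := fun p q h => h.intervalIntegrable p q
  have key1 : (∫ y in (-1:ℝ)..1, (deriv φ y)^2)
      ≤ (∫ y in (-1:ℝ)..0, (deriv ψm y)^2) + (∫ y in (0:ℝ)..1, (deriv ψp y)^2) + G1^2 * ε := by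
    have c : Continuous (fun y => (deriv φ y)^2) := by
      rw [hφd_eq]; exact cg1.pow 2
    have i1 : ∀ p q : ℝ, IntervalIntegrable (fun y => (deriv φ y)^2) volume p q :=
      fun p q => c.intervalIntegrable p q
    have i2 : ∀ p q : ℝ, IntervalIntegrable (fun y => (deriv ψp y)^2) volume p q :=
      fun p q => (hcp1.pow 2).intervalIntegrable p q
    have s1 := intervalIntegral.integral_add_adjacent_intervals (i1 (-1) 0) (i1 0 ε)
    have s2 := intervalIntegral.integral_add_adjacent_intervals (i1 (-1) ε) (i1 ε 1)
    have e1 : (∫ y in (-1:ℝ)..0, (deriv φ y)^2) = ∫ y in (-1:ℝ)..0, (deriv ψm y)^2 :=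
      integral_congr_Ioo' (by norm_num) (fun y hy => by rw [hdm y hy.2])
    have e2 : (∫ y in ε..(1:ℝ), (deriv φ y)^2) = ∫ y in ε..(1:ℝ), (deriv ψp y)^2 :=
      integral_congr_Ioo' (by linarith) (fun y hy => by rw [hdp y hy.1])
    have e3 : (∫ y in ε..(1:ℝ), (deriv ψp y)^2) ≤ ∫ y in (0:ℝ)..1, (deriv ψp y)^2 := by
      have s3 := intervalIntegral.integral_add_adjacent_intervals (i2 0 ε) (i2 ε 1)
      have n1 : (0:ℝ) ≤ ∫ y in (0:ℝ)..ε, (deriv ψp y)^2 :=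
        intervalIntegral.integral_nonneg hε.le (fun x _ => sq_nonneg _)
      linarith
    have e4 : (∫ y in (0:ℝ)..ε, (deriv φ y)^2) ≤ G1^2 * ε := by
      have hm1 : ∀ x ∈ Icc (0:ℝ) ε, (deriv φ x)^2 ≤ G1^2 := by
        intro x hx
        rw [hφd_eq]
        calc (g1 x)^2 = |g1 x|^2 := (sq_abs _).symm
          _ ≤ G1^2 := by
              apply pow_le_pow_left₀ (abs_nonneg _) (hg1b x hx)
      calc (∫ y in (0:ℝ)..ε, (deriv φ y)^2) ≤ ∫ _ in (0:ℝ)..ε, G1^2 :=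
            intervalIntegral.integral_mono_on hε.le (i1 0 ε)
              (intervalIntegrable_const) hm1
        _ = G1^2 * ε := by simp [intervalIntegral.integral_const]; ring
    linarith
  have key2 : (∫ y in (-1:ℝ)..1, (deriv (deriv φ) y)^2)
      ≤ (∫ y in (-1:ℝ)..0, (deriv (deriv ψm) y)^2)
        + (∫ y in (0:ℝ)..1, (deriv (deriv ψp) y)^2) + G2^2 * ε := by
    have c : Continuous (fun y => (deriv (deriv φ) y)^2) := by
      rw [hφdd_eq]; exact cg2.pow 2
    have i1 : ∀ p q : ℝ, IntervalIntegrable (fun y => (deriv (deriv φ) y)^2) volume p q :=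
      fun p q => c.intervalIntegrable p q
    have i2 : ∀ p q : ℝ, IntervalIntegrable (fun y => (deriv (deriv ψp) y)^2) volume p q :=
      fun p q => (hcp2.pow 2).intervalIntegrable p q
    have s1 := intervalIntegral.integral_add_adjacent_intervals (i1 (-1) 0) (i1 0 ε)
    have s2 := intervalIntegral.integral_add_adjacent_intervals (i1 (-1) ε) (i1 ε 1)
    have e1 : (∫ y in (-1:ℝ)..0, (deriv (deriv φ) y)^2)
        = ∫ y in (-1:ℝ)..0, (deriv (deriv ψm) y)^2 :=
      integral_congr_Ioo' (by norm_num) (fun y hy => by rw [hddm y hy.2])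
    have e2 : (∫ y in ε..(1:ℝ), (deriv (deriv φ) y)^2)
        = ∫ y in ε..(1:ℝ), (deriv (deriv ψp) y)^2 :=
      integral_congr_Ioo' (by linarith) (fun y hy => by rw [hddp y hy.1])
    have e3 : (∫ y in ε..(1:ℝ), (deriv (deriv ψp) y)^2)
        ≤ ∫ y in (0:ℝ)..1, (deriv (deriv ψp) y)^2 := by
      have s3 := intervalIntegral.integral_add_adjacent_intervals (i2 0 ε) (i2 ε 1)
      have n1 : (0:ℝ) ≤ ∫ y in (0:ℝ)..ε, (deriv (deriv ψp) y)^2 :=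
        intervalIntegral.integral_nonneg hε.le (fun x _ => sq_nonneg _)
      linarith
    have e4 : (∫ y in (0:ℝ)..ε, (deriv (deriv φ) y)^2) ≤ G2^2 * ε := by
      have hm1 : ∀ x ∈ Icc (0:ℝ) ε, (deriv (deriv φ) x)^2 ≤ G2^2 := by
        intro x hx
        rw [hφdd_eq]
        calc (g2 x)^2 = |g2 x|^2 := (sq_abs _).symm
          _ ≤ G2^2 := by
              apply pow_le_pow_left₀ (abs_nonneg _) (hg2b x hx)
      calc (∫ y in (0:ℝ)..ε, (deriv (deriv φ) y)^2) ≤ ∫ _ in (0:ℝ)..ε, G2^2 :=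
            intervalIntegral.integral_mono_on hε.le (i1 0 ε)
              (intervalIntegrable_const) hm1
        _ = G2^2 * ε := by simp [intervalIntegral.integral_const]; ring
    linarith
  have hit2m : iteratedDeriv 2 ψm = deriv (deriv ψm) := by
    rw [iteratedDeriv_succ, iteratedDeriv_one]
  have hit2p : iteratedDeriv 2 ψp = deriv (deriv ψp) := by
    rw [iteratedDeriv_succ, iteratedDeriv_one]
  refine ⟨φ, hφC.of_le (by norm_num), hm, hp,
    hdm (-1) (by norm_num), hdp 1 (by linarith), key1, ?_⟩
  rw [hit2m, hit2p]
  exact key2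

end Helpers

set_option maxHeartbeats 2000000 in
/-- if `0 < |B| < |B|_c` and `|ξ| ≤ |ξ|_{vc}^B` then for every `λ > 0` every
solution of the vertical problem vanishes identically on `[-1,1]`. -/

theorem vertical_no_growing_mode_of_low_frequency
    (ρp ρm μp μm g B Bc xivc : ℝ)
    (hρm : 0 < ρm) (hρ : ρm < ρp) (hμp : 0 < μp) (hμm : 0 < μm) (hg : 0 < g)
    (hB : B ≠ 0) (hBc : 0 < Bc) (hBcsq : Bc ^ 2 = sSup (BcSet g ρp ρm))
    (hBlt : |B| < Bc)
    (hxivc0 : 0 ≤ xivc) (hxivcsq : xivc ^ 2 = sInf (XivcSet g ρp ρm B))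
    (ξ : ℝ) (hξ : ξ ≠ 0) (hξle : |ξ| ≤ xivc) :
    ∀ lam : ℝ, 0 < lam → ∀ ψ : ℝ → ℝ,
      IsVertSol ρp ρm μp μm g B ξ lam 4 ψ → ∀ y ∈ Icc (-1:ℝ) 1, ψ y = 0 := by
  intro lam hlam ψ hsol
  obtain ⟨ψm, ψp, hCm, hCp, hEqm, hEqp, hval, hder, hodem, hodep, hJ1, hJ2, hb1, hb2, hb3, hb4⟩ :=
    hsol
  have hCm4 : ContDiff ℝ 4 ψm := by exact_mod_cast hCm
  have hCp4 : ContDiff ℝ 4 ψp := by exact_mod_cast hCp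
  by_contra hcon
  push_neg at hcon
  obtain ⟨y₀, hy₀, hψy₀⟩ := hcon
  have hξ2 : 0 < ξ^2 := by
    have h := abs_pos.mpr hξ
    calc (0:ℝ) < |ξ|^2 := pow_pos h 2
      _ = ξ^2 := sq_abs ξ
  have hρp : 0 < ρp := hρm.trans hρ
  have hB2n : (0:ℝ) ≤ B^2 := sq_nonneg B
  -- boundary values
  have hψm1 : ψm (-1) = 0 := by
    rw [← hEqm (-1) ⟨le_refl _, by norm_num⟩]; exact hb1
  have hψp1 : ψp 1 = 0 := by
    rw [← hEqp 1 ⟨by norm_num, le_refl _⟩]; exact hb2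
  have hψ0 : ψ 0 = ψm 0 := by
    rw [hEqp 0 ⟨le_refl _, by norm_num⟩, hval]
  -- piece identities and dissipation identities
  have hM := piece ρm μm B ξ lam hCm4 (by norm_num : (-1:ℝ) ≤ 0) hodem
  have hP := piece ρp μp B ξ lam hCp4 (by norm_num : (0:ℝ) ≤ 1) hodep
  have hEm := Edef hCm4 ξ (by norm_num : (-1:ℝ) ≤ 0)
  have hEp := Edef hCp4 ξ (by norm_num : (0:ℝ) ≤ 1)
  simp only [hψm1, hb3] at hM hEm
  simp only [hψp1, hb4, hval, hder] at hP hEp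
  simp only [hval, hder, hψ0] at hJ1 hJ2
  -- the energy identity
  have hstar : lam^2*(ξ^2*(ρm*(∫ y in (-1:ℝ)..0, (ψm y)^2) + ρp*(∫ y in (0:ℝ)..1, (ψp y)^2))
        + ρm*(∫ y in (-1:ℝ)..0, (deriv ψm y)^2) + ρp*(∫ y in (0:ℝ)..1, (deriv ψp y)^2))
      + lam*(μm*(∫ y in (-1:ℝ)..0, ((iteratedDeriv 2 ψm y + ξ^2 * ψm y)^2 + 4*ξ^2*(deriv ψm y)^2))
          + μp*(∫ y in (0:ℝ)..1, ((iteratedDeriv 2 ψp y + ξ^2 * ψp y)^2 + 4*ξ^2*(deriv ψp y)^2)))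
      + B^2*((∫ y in (-1:ℝ)..0, (iteratedDeriv 2 ψm y)^2) + (∫ y in (0:ℝ)..1, (iteratedDeriv 2 ψp y)^2))
      + ξ^2*B^2*((∫ y in (-1:ℝ)..0, (deriv ψm y)^2) + (∫ y in (0:ℝ)..1, (deriv ψp y)^2))
      - g*(ρp-ρm)*ξ^2*(ψm 0)^2 = 0 := by
    linear_combination (-1)*hM - hP - (deriv ψm 0)*hJ1 + (ψm 0)*hJ2 + (lam*μm)*hEm + (lam*μp)*hEp
  -- nonnegativity of the integrals
  have hI0mn : 0 ≤ ∫ y in (-1:ℝ)..0, (ψm y)^2 :=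
    intervalIntegral.integral_nonneg (by norm_num) (fun x _ => sq_nonneg _)
  have hI0pn : 0 ≤ ∫ y in (0:ℝ)..1, (ψp y)^2 :=
    intervalIntegral.integral_nonneg (by norm_num) (fun x _ => sq_nonneg _)
  have hI1mn : 0 ≤ ∫ y in (-1:ℝ)..0, (deriv ψm y)^2 :=
    intervalIntegral.integral_nonneg (by norm_num) (fun x _ => sq_nonneg _)
  have hI1pn : 0 ≤ ∫ y in (0:ℝ)..1, (deriv ψp y)^2 :=
    intervalIntegral.integral_nonneg (by norm_num) (fun x _ => sq_nonneg _)
  have hI2mn : 0 ≤ ∫ y in (-1:ℝ)..0, (iteratedDeriv 2 ψm y)^2 :=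
    intervalIntegral.integral_nonneg (by norm_num) (fun x _ => sq_nonneg _)
  have hI2pn : 0 ≤ ∫ y in (0:ℝ)..1, (iteratedDeriv 2 ψp y)^2 :=
    intervalIntegral.integral_nonneg (by norm_num) (fun x _ => sq_nonneg _)
  have hEmn : 0 ≤ ∫ y in (-1:ℝ)..0, ((iteratedDeriv 2 ψm y + ξ^2 * ψm y)^2 + 4*ξ^2*(deriv ψm y)^2) :=
    intervalIntegral.integral_nonneg (by norm_num) (fun x _ => by positivity)
  have hEpn : 0 ≤ ∫ y in (0:ℝ)..1, ((iteratedDeriv 2 ψp y + ξ^2 * ψp y)^2 + 4*ξ^2*(deriv ψp y)^2) :=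
    intervalIntegral.integral_nonneg (by norm_num) (fun x _ => by positivity)
  -- positivity of the kinetic term
  have hApos : 0 < ξ^2*(ρm*(∫ y in (-1:ℝ)..0, (ψm y)^2) + ρp*(∫ y in (0:ℝ)..1, (ψp y)^2))
      + ρm*(∫ y in (-1:ℝ)..0, (deriv ψm y)^2) + ρp*(∫ y in (0:ℝ)..1, (deriv ψp y)^2) := by
    have h1 : 0 < ρm*(∫ y in (-1:ℝ)..0, (ψm y)^2) + ρp*(∫ y in (0:ℝ)..1, (ψp y)^2) := by
      rcases le_or_gt y₀ 0 with h | h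
      · have hne : ψm y₀ ≠ 0 := by rw [← hEqm y₀ ⟨hy₀.1, h⟩]; exact hψy₀
        have hpos := integral_sq_pos hCm4.continuous (by norm_num : (-1:ℝ) < 0) hy₀.1 h hne
        linarith only [mul_nonneg hρp.le hI0pn, mul_pos hρm hpos]
      · have hne : ψp y₀ ≠ 0 := by rw [← hEqp y₀ ⟨h.le, hy₀.2⟩]; exact hψy₀
        have hpos := integral_sq_pos hCp4.continuous (by norm_num : (0:ℝ) < 1) h.le hy₀.2 hne
        linarith only [mul_nonneg hρm.le hI0mn, mul_pos hρp hpos]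
    linarith only [mul_pos hξ2 h1, mul_nonneg hρm.le hI1mn, mul_nonneg hρp.le hI1pn]
  have hδpos : 0 < lam^2*(ξ^2*(ρm*(∫ y in (-1:ℝ)..0, (ψm y)^2) + ρp*(∫ y in (0:ℝ)..1, (ψp y)^2))
      + ρm*(∫ y in (-1:ℝ)..0, (deriv ψm y)^2) + ρp*(∫ y in (0:ℝ)..1, (deriv ψp y)^2)) :=
    mul_pos (pow_pos hlam 2) hApos
  have hEterm : 0 ≤ lam*(μm*(∫ y in (-1:ℝ)..0, ((iteratedDeriv 2 ψm y + ξ^2 * ψm y)^2 + 4*ξ^2*(deriv ψm y)^2))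
      + μp*(∫ y in (0:ℝ)..1, ((iteratedDeriv 2 ψp y + ξ^2 * ψp y)^2 + 4*ξ^2*(deriv ψp y)^2))) :=
    mul_nonneg hlam.le (add_nonneg (mul_nonneg hμm.le hEmn) (mul_nonneg hμp.le hEpn))
  -- the key inequality
  have hkey : B^2*((∫ y in (-1:ℝ)..0, (iteratedDeriv 2 ψm y)^2) + (∫ y in (0:ℝ)..1, (iteratedDeriv 2 ψp y)^2))
      + lam^2*(ξ^2*(ρm*(∫ y in (-1:ℝ)..0, (ψm y)^2) + ρp*(∫ y in (0:ℝ)..1, (ψp y)^2))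
        + ρm*(∫ y in (-1:ℝ)..0, (deriv ψm y)^2) + ρp*(∫ y in (0:ℝ)..1, (deriv ψp y)^2))
      ≤ ξ^2 * (g*(ρp-ρm)*(ψm 0)^2
        - B^2*((∫ y in (-1:ℝ)..0, (deriv ψm y)^2) + (∫ y in (0:ℝ)..1, (deriv ψp y)^2))) := by
    linarith only [hstar, hEterm]
  have hI2sum : 0 ≤ B^2*((∫ y in (-1:ℝ)..0, (iteratedDeriv 2 ψm y)^2) + (∫ y in (0:ℝ)..1, (iteratedDeriv 2 ψp y)^2)) :=
    mul_nonneg hB2n (add_nonneg hI2mn hI2pn)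
  have hD0pos : 0 < g*(ρp-ρm)*(ψm 0)^2
      - B^2*((∫ y in (-1:ℝ)..0, (deriv ψm y)^2) + (∫ y in (0:ℝ)..1, (deriv ψp y)^2)) := by
    have h2 : 0 < ξ^2 * (g*(ρp-ρm)*(ψm 0)^2
        - B^2*((∫ y in (-1:ℝ)..0, (deriv ψm y)^2) + (∫ y in (0:ℝ)..1, (deriv ψp y)^2))) := by
      linarith only [hkey, hδpos, hI2sum]
    rcases mul_pos_iff.mp h2 with ⟨_, h⟩ | ⟨h1', _⟩
    · exact h
    · linarith only [hξ2, h1']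
  -- the smoothing corrector
  obtain ⟨K1, K2, hK1n, hK2n, hcor⟩ := corrector ψm ψp hCm4 hCp4 hval hder
  have hCcn : (0:ℝ) ≤ B^2*K2 + ξ^2*(B^2*K1) :=
    add_nonneg (mul_nonneg hB2n hK2n) (mul_nonneg hξ2.le (mul_nonneg hB2n hK1n))
  have hBK1n : (0:ℝ) ≤ B^2*K1 := mul_nonneg hB2n hK1n
  set ε : ℝ := min (1/2)
      (min ((lam^2*(ξ^2*(ρm*(∫ y in (-1:ℝ)..0, (ψm y)^2) + ρp*(∫ y in (0:ℝ)..1, (ψp y)^2))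
          + ρm*(∫ y in (-1:ℝ)..0, (deriv ψm y)^2) + ρp*(∫ y in (0:ℝ)..1, (deriv ψp y)^2)))
            / (B^2*K2 + ξ^2*(B^2*K1) + 1))
        ((g*(ρp-ρm)*(ψm 0)^2
          - B^2*((∫ y in (-1:ℝ)..0, (deriv ψm y)^2) + (∫ y in (0:ℝ)..1, (deriv ψp y)^2)))
            / (B^2*K1 + 1))) with hεdef
  have hεpos : 0 < ε := by
    apply lt_min (by norm_num)
    exact lt_min (div_pos hδpos (by linarith only [hCcn])) (div_pos hD0pos (by linarith only [hBK1n]))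
  have hε12 : ε ≤ 1/2 := min_le_left _ _
  have hεa : ε * (B^2*K2 + ξ^2*(B^2*K1) + 1)
      ≤ lam^2*(ξ^2*(ρm*(∫ y in (-1:ℝ)..0, (ψm y)^2) + ρp*(∫ y in (0:ℝ)..1, (ψp y)^2))
        + ρm*(∫ y in (-1:ℝ)..0, (deriv ψm y)^2) + ρp*(∫ y in (0:ℝ)..1, (deriv ψp y)^2)) := by
    rw [← le_div_iff₀ (by linarith only [hCcn] : (0:ℝ) < B^2*K2 + ξ^2*(B^2*K1) + 1)]
    exact le_trans (min_le_right _ _) (min_le_left _ _)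
  have hεb : ε * (B^2*K1 + 1) ≤ g*(ρp-ρm)*(ψm 0)^2
      - B^2*((∫ y in (-1:ℝ)..0, (deriv ψm y)^2) + (∫ y in (0:ℝ)..1, (deriv ψp y)^2)) := by
    rw [← le_div_iff₀ (by linarith only [hBK1n] : (0:ℝ) < B^2*K1 + 1)]
    exact le_trans (min_le_right _ _) (min_le_right _ _)
  obtain ⟨φ, hφC2, hφm, hφp, hφdm, hφdp, hφI1, hφI2⟩ := hcor ε hεpos hε12
  have hφ0 : φ 0 = ψm 0 := hφm 0 le_rfl
  -- denominator positivity for the test function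
  have hd1 : B^2 * (∫ y in (-1:ℝ)..1, (deriv φ y)^2)
      ≤ B^2*((∫ y in (-1:ℝ)..0, (deriv ψm y)^2) + (∫ y in (0:ℝ)..1, (deriv ψp y)^2) + K1*ε) := by
    apply mul_le_mul_of_nonneg_left _ hB2n
    linarith only [hφI1]
  have hdenpos : 0 < g*(ρp-ρm)*(φ 0)^2 - B^2*(∫ y in (-1:ℝ)..1, (deriv φ y)^2) := by
    rw [hφ0]
    linarith only [hd1, hεb, hεpos]
  -- the quotient is strictly below ξ²
  have hd2 : B^2 * (∫ y in (-1:ℝ)..1, (deriv (deriv φ) y)^2)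
      ≤ B^2*((∫ y in (-1:ℝ)..0, (iteratedDeriv 2 ψm y)^2) + (∫ y in (0:ℝ)..1, (iteratedDeriv 2 ψp y)^2) + K2*ε) := by
    apply mul_le_mul_of_nonneg_left _ hB2n
    linarith only [hφI2]
  have hrlt : (B^2 * ∫ y in (-1:ℝ)..1, (deriv (deriv φ) y)^2)
      / (g*(ρp-ρm)*(φ 0)^2 - B^2*(∫ y in (-1:ℝ)..1, (deriv φ y)^2)) < ξ^2 := by
    rw [div_lt_iff₀ hdenpos, hφ0]
    linarith only [hd2, hkey, hεa, hεpos, mul_le_mul_of_nonneg_left hd1 hξ2.le]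
  -- membership in XivcSet
  have hmem : (B ^ 2 * ∫ y in (-1:ℝ)..1, (deriv (deriv φ) y) ^ 2) /
      (g * (ρp - ρm) * (φ 0) ^ 2 - B ^ 2 * ∫ y in (-1:ℝ)..1, (deriv φ y) ^ 2)
      ∈ XivcSet g ρp ρm B := by
    refine ⟨φ, hφC2, ?_, ?_, ?_, ?_, ?_, rfl⟩
    · rw [hφm (-1) (by norm_num)]; exact hψm1
    · rw [hφp 1 (by linarith)]; exact hψp1
    · rw [hφdm]; exact hb3
    · rw [hφdp]; exact hb4
    · exact hdenpos
  have hbdd : BddBelow (XivcSet g ρp ρm B) := by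
    refine ⟨0, fun r hr => ?_⟩
    obtain ⟨φ', _, _, _, _, _, hpos', hreq⟩ := hr
    rw [hreq]
    exact div_nonneg (mul_nonneg (sq_nonneg B)
      (intervalIntegral.integral_nonneg (by norm_num) (fun x _ => sq_nonneg _))) hpos'.le
  have hle : xivc^2 ≤ (B ^ 2 * ∫ y in (-1:ℝ)..1, (deriv (deriv φ) y) ^ 2) /
      (g * (ρp - ρm) * (φ 0) ^ 2 - B ^ 2 * ∫ y in (-1:ℝ)..1, (deriv φ y) ^ 2) := by
    rw [hxivcsq]
    exact csInf_le hbdd hmem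
  have hfin : ξ^2 ≤ xivc^2 := by
    rw [← sq_abs ξ]
    exact pow_le_pow_left₀ (abs_nonneg ξ) hξle 2
  linarith only [hrlt, hle, hfin]

end
end

section
/- Suppose |B| ≥ |B|_c. Then for every frequency ξ ≠ 0 and every λ > 0 there is no nontrivial solution of the horizontal problem; that is, any function ψ satisfying the horizontal problem at frequency ξ with growth rate λ > 0 is identically zero on [−1,1]. -/
open MeasureTheory Set Filter Topology intervalIntegral

noncomputable section

private lemma not_ae_restrict_zero {f : ℝ → ℝ} {s : Set ℝ} (hs : MeasurableSet s)
    {c d : ℝ} (hcd : c < d) (hsub : Ioo c d ⊆ s) (hne : ∀ y ∈ Ioo c d, f y ≠ 0) :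
    ¬ (∀ᵐ y ∂(volume.restrict s), f y = 0) := by
  intro h
  rw [ae_restrict_iff' hs, ae_iff] at h
  have hsub2 : Ioo c d ⊆ {y | ¬(y ∈ s → f y = 0)} := fun y hy hcon =>
    hne y hy (hcon (hsub hy))
  have h2 := measure_mono_null hsub2 h
  rw [Real.volume_Ioo] at h2
  exact (ENNReal.ofReal_pos.mpr (by linarith)).ne' h2

private lemma exists_delta_ne_zero {f : ℝ → ℝ} (hf : Continuous f) {y0 : ℝ} (h : f y0 ≠ 0) :
    ∃ δ > 0, ∀ y, |y - y0| < δ → f y ≠ 0 := by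
  have ho : IsOpen {y : ℝ | f y ≠ 0} := IsOpen.preimage hf isOpen_ne
  obtain ⟨δ, hδ, hball⟩ := Metric.isOpen_iff.mp ho y0 h
  exact ⟨δ, hδ, fun y hy => hball (by rwa [Metric.mem_ball, Real.dist_eq])⟩

private lemma eq_zero_on_of_integral_sq_zero {f : ℝ → ℝ} (hf : Continuous f) {a b : ℝ}
    (hab : a < b) (hint : (∫ y in a..b, (f y)^2) = 0) :
    ∀ y ∈ Icc a b, f y = 0 := by
  by_contra hcon
  push_neg at hcon
  obtain ⟨y0, hy0, hy0ne⟩ := hcon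
  obtain ⟨hy0a, hy0b⟩ := hy0
  have hae : ∀ᵐ y ∂(volume.restrict (Ioc a b)), (f y)^2 = 0 := by
    have := (integral_eq_zero_iff_of_le_of_nonneg_ae hab.le
      (Eventually.of_forall (fun y => sq_nonneg (f y))) ((hf.pow 2).intervalIntegrable _ _)).mp hint
    exact this
  obtain ⟨δ, hδ, hne⟩ := exists_delta_ne_zero hf hy0ne
  have hcd : max a (y0 - δ) < min b (y0 + δ) := by
    apply max_lt
    · exact lt_min hab (by linarith)
    · exact lt_min (by linarith) (by linarith)
  have hsub : Ioo (max a (y0 - δ)) (min b (y0 + δ)) ⊆ Ioc a b := fun y hy =>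
    ⟨lt_of_le_of_lt (le_max_left _ _) hy.1, le_trans hy.2.le (min_le_left _ _)⟩
  refine not_ae_restrict_zero (f := fun y => (f y)^2) measurableSet_Ioc hcd hsub
    (fun y hy => ?_) hae
  apply pow_ne_zero
  apply hne
  rw [abs_lt]
  have h1 := lt_of_le_of_lt (le_max_right a (y0 - δ)) hy.1
  have h2 := lt_of_lt_of_le hy.2 (min_le_right b (y0 + δ))
  constructor <;> linarith

private lemma itd2 (f : ℝ → ℝ) : iteratedDeriv 2 f = deriv (deriv f) := by
  rw [show (2:ℕ) = 1+1 from rfl, iteratedDeriv_succ, iteratedDeriv_one]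
private lemma itd3 (f : ℝ → ℝ) : iteratedDeriv 3 f = deriv (deriv (deriv f)) := by
  rw [show (3:ℕ) = 2+1 from rfl, iteratedDeriv_succ, itd2]
private lemma itd4 (f : ℝ → ℝ) : iteratedDeriv 4 f = deriv (deriv (deriv (deriv f))) := by
  rw [show (4:ℕ) = 3+1 from rfl, iteratedDeriv_succ, itd3]

private lemma derivpack {f : ℝ → ℝ} (hf : ContDiff ℝ (4:ℕ∞) f) :
    Differentiable ℝ f ∧ Differentiable ℝ (deriv f) ∧ Differentiable ℝ (deriv (deriv f)) ∧
    Differentiable ℝ (deriv (deriv (deriv f))) ∧ Continuous (deriv (deriv (deriv (deriv f)))) := by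
  have h4 : ContDiff ℝ ((3:WithTop ℕ∞) + 1) f := by exact_mod_cast hf
  have h3 := (contDiff_succ_iff_deriv.mp h4).2.2
  have h3' : ContDiff ℝ ((2:WithTop ℕ∞) + 1) (deriv f) := by exact_mod_cast h3
  have h2 := (contDiff_succ_iff_deriv.mp h3').2.2
  have h2' : ContDiff ℝ ((1:WithTop ℕ∞) + 1) (deriv (deriv f)) := by exact_mod_cast h2
  have h1 := (contDiff_succ_iff_deriv.mp h2').2.2
  exact ⟨h4.differentiable (by norm_num), h3.differentiable (by norm_num),
    h2.differentiable (by norm_num), h1.differentiable (by norm_num),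
    (contDiff_one_iff_deriv.mp h1).2⟩

private lemma piece_energy {f : ℝ → ℝ} (hf : ContDiff ℝ (4:ℕ∞) f)
    (ρ0 μ0 B ξ lam a b : ℝ) (hab : a < b)
    (hode : ∀ y ∈ Ioo a b, HorizODE ρ0 μ0 B ξ lam f y) :
    lam^2*ρ0*(ξ^2*(∫ y in a..b, (f y)^2) + ∫ y in a..b, (deriv f y)^2)
      + μ0*lam*(∫ y in a..b, ((deriv (deriv f) y + ξ^2 * f y)^2 + 4*ξ^2*(deriv f y)^2))
      + B^2*ξ^2*(ξ^2*(∫ y in a..b, (f y)^2) + ∫ y in a..b, (deriv f y)^2)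
      = (lam^2*ρ0 + 4*μ0*lam*ξ^2 + B^2*ξ^2) * (deriv f b * f b - deriv f a * f a)
        - μ0*lam*((deriv (deriv (deriv f)) b * f b - deriv (deriv f) b * deriv f b)
                 - (deriv (deriv (deriv f)) a * f a - deriv (deriv f) a * deriv f a)) := by
  obtain ⟨hd0, hd1, hd2, hd3, hc4⟩ := derivpack hf
  set f1 := deriv f with hf1
  set f2 := deriv f1 with hf2
  set f3 := deriv f2 with hf3
  set f4 := deriv f3 with hf4
  have hc0 : Continuous f := hd0.continuous
  have hc1 : Continuous f1 := hd1.continuous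
  have hc2 : Continuous f2 := hd2.continuous
  have hc3 : Continuous f3 := hd3.continuous
  set c1 := -(lam^2*ρ0*ξ^2 + μ0*lam*ξ^4 + B^2*ξ^4) with hc1def
  set c2 := lam^2*ρ0 + 2*μ0*lam*ξ^2 + B^2*ξ^2 with hc2def
  set c3 := -(μ0*lam) with hc3def
  -- integrals
  set IA := ∫ y in a..b, (f y)^2 with hIA
  set IC := ∫ y in a..b, (f1 y)^2 with hIC
  set IF2 := ∫ y in a..b, (f2 y)^2 with hIF
  set I21 := ∫ y in a..b, f2 y * f y with hI21
  set I31 := ∫ y in a..b, f3 y * f1 y with hI31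
  set I40 := ∫ y in a..b, f4 y * f y with hI40
  set IS := ∫ y in a..b, ((f2 y + ξ^2 * f y)^2 + 4*ξ^2*(f1 y)^2) with hIS
  -- IBP identities
  have h1 : I21 + IC = f1 b * f b - f1 a * f a := by
    have := integral_deriv_mul_eq_sub_of_hasDerivAt (u := f1) (v := f) (u' := f2) (v' := f1)
      (a := a) (b := b) hc1.continuousOn hc0.continuousOn
      (fun x _ => (hd1 x).hasDerivAt) (fun x _ => (hd0 x).hasDerivAt)
      (hc2.intervalIntegrable _ _) (hc1.intervalIntegrable _ _)
    rw [integral_add (f := fun x => f2 x * f x) (g := fun x => f1 x * f1 x) ((hc2.mul hc0).intervalIntegrable _ _) ((hc1.mul hc1).intervalIntegrable _ _),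
      integral_congr (g := fun y => (f1 y)^2) (fun y _ => (pow_two (f1 y)).symm)] at this
    exact this
  have h2 : I40 + I31 = f3 b * f b - f3 a * f a := by
    have := integral_deriv_mul_eq_sub_of_hasDerivAt (u := f3) (v := f) (u' := f4) (v' := f1)
      (a := a) (b := b) hc3.continuousOn hc0.continuousOn
      (fun x _ => (hd3 x).hasDerivAt) (fun x _ => (hd0 x).hasDerivAt)
      (hc4.intervalIntegrable _ _) (hc1.intervalIntegrable _ _)
    rw [integral_add (f := fun x => f4 x * f x) (g := fun x => f3 x * f1 x) ((hc4.mul hc0).intervalIntegrable _ _)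
      ((hc3.mul hc1).intervalIntegrable _ _)] at this
    exact this
  have h3 : I31 + IF2 = f2 b * f1 b - f2 a * f1 a := by
    have := integral_deriv_mul_eq_sub_of_hasDerivAt (u := f2) (v := f1) (u' := f3) (v' := f2)
      (a := a) (b := b) hc2.continuousOn hc1.continuousOn
      (fun x _ => (hd2 x).hasDerivAt) (fun x _ => (hd1 x).hasDerivAt)
      (hc3.intervalIntegrable _ _) (hc2.intervalIntegrable _ _)
    rw [integral_add (f := fun x => f3 x * f1 x) (g := fun x => f2 x * f2 x) ((hc3.mul hc1).intervalIntegrable _ _)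
      ((hc2.mul hc2).intervalIntegrable _ _),
      integral_congr (g := fun y => (f2 y)^2) (fun y _ => (pow_two (f2 y)).symm)] at this
    exact this
  -- integrated ODE
  have h4 : c1*IA + c2*I21 + c3*I40 = 0 := by
    have hptw : ∀ x ∈ Ioo a b,
        c1*(f x)^2 + c2*(f2 x * f x) + c3*(f4 x * f x) = 0 := by
      intro x hx
      have h := hode x hx
      unfold HorizODE at h
      rw [itd2, itd4] at h
      rw [hc1def, hc2def, hc3def]
      linear_combination (f x) * h
    have hae : ∀ᵐ x ∂(volume : Measure ℝ), x ∈ uIoc a b →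
        c1*(f x)^2 + c2*(f2 x * f x) + c3*(f4 x * f x) = (0:ℝ) := by
      rw [ae_iff]
      refine measure_mono_null (t := {b}) (fun x hx => ?_) Real.volume_singleton
      simp only [mem_setOf_eq, not_forall] at hx
      obtain ⟨hxI, hxne⟩ := hx
      rw [uIoc_of_le hab.le] at hxI
      rcases eq_or_lt_of_le hxI.2 with h | h
      · exact h
      · exact absurd (hptw x ⟨hxI.1, h⟩) hxne
    have h0 : (∫ x in a..b, (c1*(f x)^2 + c2*(f2 x * f x) + c3*(f4 x * f x))) = 0 := by
      rw [integral_congr_ae (g := fun _ => (0:ℝ)) hae]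
      simp
    rw [integral_add (f := fun x => c1*(f x)^2 + c2*(f2 x * f x)) (g := fun x => c3*(f4 x * f x)) (((continuous_const.mul (hc0.pow 2)).add
          (continuous_const.mul (hc2.mul hc0))).intervalIntegrable _ _)
        ((continuous_const.mul (hc4.mul hc0)).intervalIntegrable _ _),
      integral_add (f := fun x => c1*(f x)^2) (g := fun x => c2*(f2 x * f x)) ((continuous_const.mul (hc0.pow 2)).intervalIntegrable _ _)
        ((continuous_const.mul (hc2.mul hc0)).intervalIntegrable _ _),
      intervalIntegral.integral_const_mul, intervalIntegral.integral_const_mul, intervalIntegral.integral_const_mul] at h0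
    exact h0
  -- expansion of the S-integral
  have h5 : IS = IF2 + ξ^4*IA + 2*ξ^2*I21 + 4*ξ^2*IC := by
    rw [hIS, integral_congr (g := fun y => (f2 y)^2 + ξ^4*(f y)^2 + 2*ξ^2*(f2 y * f y)
        + 4*ξ^2*(f1 y)^2) (fun y _ => by ring)]
    rw [integral_add (f := fun x => f2 x ^ 2 + ξ^4 * f x ^ 2 + 2*ξ^2*(f2 x * f x)) (g := fun x => 4*ξ^2*f1 x ^ 2) (((((hc2.pow 2)).add (continuous_const.mul (hc0.pow 2))).add
          (continuous_const.mul (hc2.mul hc0))).intervalIntegrable _ _)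
        ((continuous_const.mul (hc1.pow 2)).intervalIntegrable _ _),
      integral_add (f := fun x => f2 x ^ 2 + ξ^4 * f x ^ 2) (g := fun x => 2*ξ^2*(f2 x * f x)) (((hc2.pow 2).add (continuous_const.mul (hc0.pow 2))).intervalIntegrable _ _)
        ((continuous_const.mul (hc2.mul hc0)).intervalIntegrable _ _),
      integral_add (f := fun x => f2 x ^ 2) (g := fun x => ξ^4 * f x ^ 2) ((hc2.pow 2).intervalIntegrable _ _)
        ((continuous_const.mul (hc0.pow 2)).intervalIntegrable _ _),
      intervalIntegral.integral_const_mul, intervalIntegral.integral_const_mul, intervalIntegral.integral_const_mul]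
  linear_combination (lam^2*ρ0 + B^2*ξ^2 + 4*μ0*lam*ξ^2) * h1 + (-(μ0*lam)) * h2
    + (μ0*lam) * h3 + (-1 : ℝ) * h4 + (μ0*lam) * h5

private lemma glue_lemma {ψm ψp : ℝ → ℝ} (hm : ContDiff ℝ (4:ℕ∞) ψm) (hp : ContDiff ℝ (4:ℕ∞) ψp)
    (hval : ψp 0 = ψm 0) :
    ∃ φ : ℝ → ℝ, (∃ K, LipschitzWith K φ) ∧
      (∀ y, -1 ≤ y → y ≤ 0 → φ y = ψm y) ∧
      (∀ y, 0 < y → y ≤ 1 → φ y = ψp y) ∧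
      (∫ y in (-1:ℝ)..1, (deriv φ y)^2)
        = (∫ y in (-1:ℝ)..0, (deriv ψm y)^2) + ∫ y in (0:ℝ)..1, (deriv ψp y)^2 := by
  obtain ⟨hdm, hdm1, -, -, -⟩ := derivpack hm
  obtain ⟨hdp, hdp1, -, -, -⟩ := derivpack hp
  have hcm : Continuous ψm := hdm.continuous
  have hcp : Continuous ψp := hdp.continuous
  have hcm1 : Continuous (deriv ψm) := hdm1.continuous
  have hcp1 : Continuous (deriv ψp) := hdp1.continuous
  set cl : ℝ → ℝ := fun y => max (-1) (min 1 y) with hcl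
  set φ : ℝ → ℝ := fun y => if cl y ≤ 0 then ψm (cl y) else ψp (cl y) with hφ
  have hclmem : ∀ y, cl y ∈ Icc (-1:ℝ) 1 :=
    fun y => ⟨le_max_left _ _, max_le (by norm_num) (min_le_left _ _)⟩
  have hclid : ∀ y, -1 ≤ y → y ≤ 1 → cl y = y := by
    intro y h1 h2
    rw [hcl]
    simp only [min_eq_right h2, max_eq_right h1]
  have h2 : ∀ y, -1 ≤ y → y ≤ 0 → φ y = ψm y := by
    intro y ha hb
    rw [hφ]
    simp only [hclid y ha (by linarith), if_pos hb]
  have h3 : ∀ y, 0 < y → y ≤ 1 → φ y = ψp y := by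
    intro y ha hb
    rw [hφ]
    simp only [hclid y (by linarith) hb, if_neg (not_le.mpr ha)]
  -- Lipschitz
  obtain ⟨Cm, hCm⟩ := IsCompact.exists_bound_of_continuousOn (isCompact_Icc (a := (-1:ℝ)) (b := 0))
    hcm1.continuousOn
  obtain ⟨Cp, hCp⟩ := IsCompact.exists_bound_of_continuousOn (isCompact_Icc (a := (0:ℝ)) (b := 1))
    hcp1.continuousOn
  set K0 : ℝ := max (max Cm Cp) 0 with hK0
  have hK0nn : 0 ≤ K0 := le_max_right _ _
  have hmlip : ∀ u ∈ Icc (-1:ℝ) 0, ∀ w ∈ Icc (-1:ℝ) 0, |ψm w - ψm u| ≤ K0 * |w - u| := by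
    intro u hu w hw
    have := Convex.norm_image_sub_le_of_norm_deriv_le (f := ψm) (C := K0)
      (fun x _ => hdm x)
      (fun x hx => le_trans (hCm x hx) (le_max_of_le_left (le_max_left _ _)))
      (convex_Icc _ _) hu hw
    simpa [Real.norm_eq_abs] using this
  have hplip : ∀ u ∈ Icc (0:ℝ) 1, ∀ w ∈ Icc (0:ℝ) 1, |ψp w - ψp u| ≤ K0 * |w - u| := by
    intro u hu w hw
    have := Convex.norm_image_sub_le_of_norm_deriv_le (f := ψp) (C := K0)
      (fun x _ => hdp x)
      (fun x hx => le_trans (hCp x hx) (le_max_of_le_left (le_max_right _ _)))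
      (convex_Icc _ _) hu hw
    simpa [Real.norm_eq_abs] using this
  have hΦ : ∀ u ∈ Icc (-1:ℝ) 1, ∀ w ∈ Icc (-1:ℝ) 1,
      |(if u ≤ 0 then ψm u else ψp u) - (if w ≤ 0 then ψm w else ψp w)| ≤ K0 * |u - w| := by
    intro u hu w hw
    by_cases hu0 : u ≤ 0 <;> by_cases hw0 : w ≤ 0
    · rw [if_pos hu0, if_pos hw0]
      have := hmlip w ⟨hw.1, hw0⟩ u ⟨hu.1, hu0⟩
      linarith [this]
    · rw [if_pos hu0, if_neg hw0]
      push_neg at hw0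
      have e1 := hmlip 0 ⟨by norm_num, le_refl 0⟩ u ⟨hu.1, hu0⟩
      have e2 := hplip 0 ⟨le_refl 0, by norm_num⟩ w ⟨hw0.le, hw.2⟩
      have habs : |u - w| = (0 - u) + (w - 0) := by
        rw [abs_of_nonpos (by linarith)]; ring
      calc |ψm u - ψp w| = |(ψm u - ψm 0) - (ψp w - ψp 0)| := by rw [hval]; ring_nf
        _ ≤ |ψm u - ψm 0| + |ψp w - ψp 0| := abs_sub _ _
        _ ≤ K0 * |u - 0| + K0 * |w - 0| := add_le_add e1 e2
        _ = K0 * |u - w| := by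
            rw [habs, abs_of_nonpos (by linarith), abs_of_nonneg (by linarith)]
            ring
    · rw [if_neg hu0, if_pos hw0]
      push_neg at hu0
      have e1 := hplip 0 ⟨le_refl 0, by norm_num⟩ u ⟨hu0.le, hu.2⟩
      have e2 := hmlip 0 ⟨by norm_num, le_refl 0⟩ w ⟨hw.1, hw0⟩
      calc |ψp u - ψm w| = |(ψp u - ψp 0) - (ψm w - ψm 0)| := by rw [hval]; ring_nf
        _ ≤ |ψp u - ψp 0| + |ψm w - ψm 0| := abs_sub _ _
        _ ≤ K0 * |u - 0| + K0 * |w - 0| := add_le_add e1 e2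
        _ = K0 * |u - w| := by
            rw [abs_of_nonneg (by linarith), abs_of_nonpos (by linarith),
              abs_of_nonneg (by linarith)]
            ring
    · rw [if_neg hu0, if_neg hw0]
      push_neg at hu0 hw0
      have := hplip w ⟨hw0.le, hw.2⟩ u ⟨hu0.le, hu.2⟩
      linarith [this]
  have hlip : LipschitzWith K0.toNNReal φ := by
    apply LipschitzWith.of_dist_le_mul
    intro x y
    have hcllip : |cl x - cl y| ≤ |x - y| := by
      rw [hcl]
      calc |max (-1) (min 1 x) - max (-1) (min 1 y)|
          = |max (min 1 x) (-1) - max (min 1 y) (-1)| := by rw [max_comm, max_comm (-1)]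
        _ ≤ |min 1 x - min 1 y| := abs_max_sub_max_le_abs _ _ _
        _ ≤ max |1 - 1| |x - y| := abs_min_sub_min_le_max _ _ _ _
        _ = |x - y| := by rw [sub_self, abs_zero]; exact max_eq_right (abs_nonneg _)
    have hmain := hΦ (cl x) (hclmem x) (cl y) (hclmem y)
    rw [Real.dist_eq, Real.dist_eq, Real.coe_toNNReal K0 hK0nn]
    calc |φ x - φ y| ≤ K0 * |cl x - cl y| := hmain
      _ ≤ K0 * |x - y| := mul_le_mul_of_nonneg_left hcllip hK0nn
  -- derivative equalities
  have hdeq_m : ∀ x ∈ Ioo (-1:ℝ) 0, deriv φ x = deriv ψm x := by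
    intro x hx
    apply Filter.EventuallyEq.deriv_eq
    filter_upwards [Ioo_mem_nhds hx.1 hx.2] with z hz
    exact h2 z hz.1.le hz.2.le
  have hdeq_p : ∀ x ∈ Ioo (0:ℝ) 1, deriv φ x = deriv ψp x := by
    intro x hx
    apply Filter.EventuallyEq.deriv_eq
    filter_upwards [Ioo_mem_nhds hx.1 hx.2] with z hz
    exact h3 z hz.1 hz.2.le
  -- ae equalities on Ioc pieces
  have haem : ∀ᵐ x ∂(volume : Measure ℝ), x ∈ uIoc (-1:ℝ) 0 → (deriv φ x)^2 = (deriv ψm x)^2 := by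
    rw [ae_iff]
    refine measure_mono_null (t := {0}) (fun x hx => ?_) Real.volume_singleton
    simp only [mem_setOf_eq, not_forall] at hx
    obtain ⟨hxI, hxne⟩ := hx
    rw [uIoc_of_le (by norm_num : (-1:ℝ) ≤ 0)] at hxI
    rcases eq_or_lt_of_le hxI.2 with h | h
    · exact h
    · exact absurd (by rw [hdeq_m x ⟨hxI.1, h⟩]) hxne
  have haep : ∀ᵐ x ∂(volume : Measure ℝ), x ∈ uIoc (0:ℝ) 1 → (deriv φ x)^2 = (deriv ψp x)^2 := by
    rw [ae_iff]
    refine measure_mono_null (t := {1}) (fun x hx => ?_) Real.volume_singleton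
    simp only [mem_setOf_eq, not_forall] at hx
    obtain ⟨hxI, hxne⟩ := hx
    rw [uIoc_of_le (by norm_num : (0:ℝ) ≤ 1)] at hxI
    rcases eq_or_lt_of_le hxI.2 with h | h
    · exact h
    · exact absurd (by rw [hdeq_p x ⟨hxI.1, h⟩]) hxne
  -- integrability
  have hilm : IntervalIntegrable (fun y => (deriv φ y)^2) volume (-1) 0 := by
    rw [intervalIntegrable_iff_integrableOn_Ioc_of_le (by norm_num)]
    refine (((hcm1.pow 2).integrableOn_Ioc).congr ?_)
    rw [Filter.EventuallyEq, ae_restrict_iff' measurableSet_Ioc]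
    filter_upwards [haem] with x hx hxI
    exact (hx (by rwa [uIoc_of_le (by norm_num : (-1:ℝ) ≤ 0)])).symm
  have hilp : IntervalIntegrable (fun y => (deriv φ y)^2) volume 0 1 := by
    rw [intervalIntegrable_iff_integrableOn_Ioc_of_le (by norm_num)]
    refine (((hcp1.pow 2).integrableOn_Ioc).congr ?_)
    rw [Filter.EventuallyEq, ae_restrict_iff' measurableSet_Ioc]
    filter_upwards [haep] with x hx hxI
    exact (hx (by rwa [uIoc_of_le (by norm_num : (0:ℝ) ≤ 1)])).symm
  refine ⟨φ, ⟨K0.toNNReal, hlip⟩, h2, h3, ?_⟩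
  rw [← integral_add_adjacent_intervals hilm hilp]
  rw [integral_congr_ae haem, integral_congr_ae haep]

set_option maxHeartbeats 1000000 in
/-- if `|B| ≥ |B|_c` then for every `ξ ≠ 0` and `λ > 0` every solution of the
horizontal problem vanishes identically on `[-1,1]`. -/
theorem horizontal_no_growing_mode_of_large_B
    (ρp ρm μp μm g B Bc : ℝ)
    (hρm : 0 < ρm) (hρ : ρm < ρp) (hμp : 0 < μp) (hμm : 0 < μm) (hg : 0 < g)
    (hB : B ≠ 0) (hBc : 0 < Bc) (hBcsq : Bc ^ 2 = sSup (BcSet g ρp ρm))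
    (hBge : Bc ≤ |B|) :
    ∀ ξ : ℝ, ξ ≠ 0 → ∀ lam : ℝ, 0 < lam → ∀ ψ : ℝ → ℝ,
      IsHorizSol ρp ρm μp μm g B ξ lam 4 ψ → ∀ y ∈ Icc (-1:ℝ) 1, ψ y = 0 := by
  intro ξ hξ lam hlam ψ hsol
  obtain ⟨ψm, ψp, hψm4, hψp4, hrm, hrp, hval, hder, hodem, hodep, hJ1, hJ2,
    hb1, hb2, hb3, hb4⟩ := hsol
  by_contra hcon
  push_neg at hcon
  obtain ⟨y0, hy0, hy0ne⟩ := hcon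
  obtain ⟨hdm0, hdm1, -, -, -⟩ := derivpack hψm4
  obtain ⟨hdp0, hdp1, -, -, -⟩ := derivpack hψp4
  have hcm : Continuous ψm := hdm0.continuous
  have hcp : Continuous ψp := hdp0.continuous
  -- boundary values
  have hψm1 : ψm (-1) = 0 := by rw [← hrm (-1) ⟨le_refl _, by norm_num⟩]; exact hb1
  have hψp1 : ψp 1 = 0 := by rw [← hrp 1 ⟨by norm_num, le_refl _⟩]; exact hb2
  have hψ0 : ψ 0 = ψm 0 := hrm 0 ⟨by norm_num, le_refl _⟩
  -- piece energy identities
  have Pm := piece_energy hψm4 ρm μm B ξ lam (-1) 0 (by norm_num) hodem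
  have Pp := piece_energy hψp4 ρp μp B ξ lam 0 1 (by norm_num) hodep
  rw [hψm1, hb3] at Pm
  rw [hψp1, hb4] at Pp
  -- jump conditions in deriv form
  rw [itd2 ψp, itd2 ψm] at hJ1
  rw [itd3 ψp, itd3 ψm] at hJ2
  rw [hval] at hJ1 Pp
  rw [hder] at hJ2 Pp
  rw [hψ0] at hJ2
  -- names for the integrals
  set Am := ∫ y in (-1:ℝ)..0, (ψm y)^2 with hAmdef
  set Cm := ∫ y in (-1:ℝ)..0, (deriv ψm y)^2 with hCmdef
  set Sm := ∫ y in (-1:ℝ)..0,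
    ((deriv (deriv ψm) y + ξ^2 * ψm y)^2 + 4*ξ^2*(deriv ψm y)^2) with hSmdef
  set Ap := ∫ y in (0:ℝ)..1, (ψp y)^2 with hApdef
  set Cp := ∫ y in (0:ℝ)..1, (deriv ψp y)^2 with hCpdef
  set Sp := ∫ y in (0:ℝ)..1,
    ((deriv (deriv ψp) y + ξ^2 * ψp y)^2 + 4*ξ^2*(deriv ψp y)^2) with hSpdef
  -- combined energy identity
  have key : lam^2*ρm*(ξ^2*Am + Cm) + μm*lam*Sm + B^2*ξ^2*(ξ^2*Am + Cm)
      + (lam^2*ρp*(ξ^2*Ap + Cp) + μp*lam*Sp + B^2*ξ^2*(ξ^2*Ap + Cp))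
      = g*(ρp-ρm)*ξ^2*(ψm 0)^2 := by
    linear_combination Pm + Pp + (ψm 0) * hJ2 - (deriv ψm 0) * hJ1
  -- nonnegativity of the integrals
  have hAmnn : 0 ≤ Am := by
    rw [hAmdef]; exact integral_nonneg (by norm_num) fun u _ => sq_nonneg _
  have hApnn : 0 ≤ Ap := by
    rw [hApdef]; exact integral_nonneg (by norm_num) fun u _ => sq_nonneg _
  have hCmnn : 0 ≤ Cm := by
    rw [hCmdef]; exact integral_nonneg (by norm_num) fun u _ => sq_nonneg _
  have hCpnn : 0 ≤ Cp := by
    rw [hCpdef]; exact integral_nonneg (by norm_num) fun u _ => sq_nonneg _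
  have hSmnn : 0 ≤ Sm := by
    rw [hSmdef]
    exact integral_nonneg (by norm_num)
      fun u _ => add_nonneg (sq_nonneg _) (by positivity)
  have hSpnn : 0 ≤ Sp := by
    rw [hSpdef]
    exact integral_nonneg (by norm_num)
      fun u _ => add_nonneg (sq_nonneg _) (by positivity)
  have hB2 : 0 < B^2 := lt_of_le_of_ne (sq_nonneg B) (Ne.symm (pow_ne_zero 2 hB))
  have hξ2 : 0 < ξ^2 := lt_of_le_of_ne (sq_nonneg ξ) (Ne.symm (pow_ne_zero 2 hξ))
  -- the key spectral inequality coming from the critical magnetic number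
  have hkey : g*(ρp-ρm)*(ψm 0)^2 ≤ B^2*(Cm+Cp) := by
    by_cases hC0 : Cm + Cp = 0
    · have hCm0 : (∫ y in (-1:ℝ)..0, (deriv ψm y)^2) = 0 := by
        rw [← hCmdef]; linarith
      have hder0 := eq_zero_on_of_integral_sq_zero hdm1.continuous
        (by norm_num : (-1:ℝ) < 0) hCm0
      have hFTC : ∫ y in (-1:ℝ)..0, deriv ψm y = ψm 0 - ψm (-1) :=
        integral_deriv_eq_sub (fun x _ => hdm0 x) (hdm1.continuous.intervalIntegrable _ _)
      have hzero : (∫ y in (-1:ℝ)..0, deriv ψm y) = 0 := by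
        rw [integral_congr (g := fun _ => (0:ℝ)) (fun x hx => by
          rw [uIcc_of_le (by norm_num : (-1:ℝ) ≤ 0)] at hx
          exact hder0 x hx)]
        simp
      have hv0 : ψm 0 = 0 := by rw [hψm1] at hFTC; linarith
      rw [hv0, hC0]
      norm_num
    · obtain ⟨φ, hKlip, hφm, hφp, hφint⟩ := glue_lemma hψm4 hψp4 hval
      rw [← hCmdef, ← hCpdef] at hφint
      have hφm1 : φ (-1) = 0 := by
        rw [hφm (-1) le_rfl (by norm_num), hψm1]
      have hφ1 : φ 1 = 0 := by rw [hφp 1 one_pos le_rfl, hψp1]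
      have hφ0 : φ 0 = ψm 0 := hφm 0 (by norm_num) le_rfl
      -- φ is not a.e. zero on [-1,1]
      have hnae : ¬ (∀ᵐ y ∂(volume.restrict (Icc (-1:ℝ) 1)), φ y = 0) := by
        rcases lt_trichotomy y0 0 with hy | hy | hy
        · have hy0m : y0 ∈ Icc (-1:ℝ) 0 := ⟨hy0.1, hy.le⟩
          have hmne : ψm y0 ≠ 0 := by rw [← hrm y0 hy0m]; exact hy0ne
          have hy0gt : -1 < y0 := lt_of_le_of_ne hy0.1
            (Ne.symm (fun h => hy0ne (by rw [h]; exact hb1)))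
          obtain ⟨δ, hδ, hne⟩ := exists_delta_ne_zero hcm hmne
          refine not_ae_restrict_zero measurableSet_Icc
            (c := max (-1) (y0 - δ)) (d := min 0 (y0 + δ)) ?_ ?_ ?_
          · exact max_lt (lt_min (by norm_num) (by linarith))
              (lt_min (by linarith) (by linarith))
          · intro y hyy
            have h1 := lt_of_le_of_lt (le_max_left _ _) hyy.1
            have h2 := lt_of_lt_of_le hyy.2 (min_le_left _ _)
            exact ⟨h1.le, by linarith⟩
          · intro y hyy
            have h1 := lt_of_le_of_lt (le_max_left _ _) hyy.1
            have h1' := lt_of_le_of_lt (le_max_right _ _) hyy.1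
            have h2 := lt_of_lt_of_le hyy.2 (min_le_left _ _)
            have h2' := lt_of_lt_of_le hyy.2 (min_le_right _ _)
            rw [hφm y h1.le h2.le]
            exact hne y (abs_lt.mpr ⟨by linarith, by linarith⟩)
        · have hvne : ψp 0 ≠ 0 := by
            have h' : ψ y0 ≠ 0 := hy0ne
            rw [hy] at h'
            rw [hval, ← hψ0]; exact h'
          obtain ⟨δ, hδ, hne⟩ := exists_delta_ne_zero hcp hvne
          refine not_ae_restrict_zero measurableSet_Icc
            (c := (0:ℝ)) (d := min 1 δ) ?_ ?_ ?_
          · exact lt_min one_pos hδ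
          · intro y hyy
            have h2 := lt_of_lt_of_le hyy.2 (min_le_left _ _)
            exact ⟨by linarith [hyy.1], h2.le⟩
          · intro y hyy
            have h2 := lt_of_lt_of_le hyy.2 (min_le_left _ _)
            have h2' := lt_of_lt_of_le hyy.2 (min_le_right _ _)
            rw [hφp y hyy.1 h2.le]
            exact hne y (abs_lt.mpr ⟨by linarith [hyy.1], by linarith⟩)
        · have hy0p : y0 ∈ Icc (0:ℝ) 1 := ⟨hy.le, hy0.2⟩
          have hpne : ψp y0 ≠ 0 := by rw [← hrp y0 hy0p]; exact hy0ne
          have hy0lt : y0 < 1 := lt_of_le_of_ne hy0.2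
            (fun h => hy0ne (by rw [h]; exact hb2))
          obtain ⟨δ, hδ, hne⟩ := exists_delta_ne_zero hcp hpne
          refine not_ae_restrict_zero measurableSet_Icc
            (c := max 0 (y0 - δ)) (d := min 1 (y0 + δ)) ?_ ?_ ?_
          · exact max_lt (lt_min one_pos (by linarith))
              (lt_min (by linarith) (by linarith))
          · intro y hyy
            have h1 := lt_of_le_of_lt (le_max_left _ _) hyy.1
            have h2 := lt_of_lt_of_le hyy.2 (min_le_left _ _)
            exact ⟨by linarith, h2.le⟩
          · intro y hyy
            have h1 := lt_of_le_of_lt (le_max_left _ _) hyy.1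
            have h1' := lt_of_le_of_lt (le_max_right _ _) hyy.1
            have h2 := lt_of_lt_of_le hyy.2 (min_le_left _ _)
            have h2' := lt_of_lt_of_le hyy.2 (min_le_right _ _)
            rw [hφp y h1 h2.le]
            exact hne y (abs_lt.mpr ⟨by linarith, by linarith⟩)
      have hmem : g * (ρp - ρm) * (φ 0) ^ 2 / (∫ y in (-1:ℝ)..1, (deriv φ y) ^ 2)
          ∈ BcSet g ρp ρm := ⟨φ, hKlip, hφm1, hφ1, hnae, rfl⟩
      rcases em (BddAbove (BcSet g ρp ρm)) with hbdd | hnb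
      · have hrle := le_csSup hbdd hmem
        rw [← hBcsq] at hrle
        have hDpos : 0 < Cm + Cp :=
          lt_of_le_of_ne (by linarith) (Ne.symm hC0)
        rw [hφint, hφ0] at hrle
        have h1 : g*(ρp-ρm)*(ψm 0)^2 ≤ Bc^2 * (Cm+Cp) := by
          rw [div_le_iff₀ hDpos] at hrle
          linarith
        have h2 : Bc^2 ≤ B^2 := by
          rw [← sq_abs B]
          exact pow_le_pow_left₀ hBc.le hBge 2
        calc g*(ρp-ρm)*(ψm 0)^2 ≤ Bc^2 * (Cm+Cp) := h1
          _ ≤ B^2 * (Cm+Cp) := mul_le_mul_of_nonneg_right h2 hDpos.le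
      · exfalso
        rw [csSup_of_not_bddAbove hnb, Real.sSup_empty] at hBcsq
        exact (pow_ne_zero 2 hBc.ne') hBcsq
  -- conclude that the L² norms vanish
  have hρp : 0 < ρp := lt_trans hρm hρ
  have hkeyξ : ξ^2*(g*(ρp-ρm)*(ψm 0)^2) ≤ ξ^2*(B^2*(Cm+Cp)) :=
    mul_le_mul_of_nonneg_left hkey (sq_nonneg ξ)
  have n1 : 0 ≤ lam^2*ρm*Cm := mul_nonneg (mul_nonneg (sq_nonneg lam) hρm.le) hCmnn
  have n2 : 0 ≤ μm*lam*Sm := mul_nonneg (mul_nonneg hμm.le hlam.le) hSmnn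
  have n3 : 0 ≤ μp*lam*Sp := mul_nonneg (mul_nonneg hμp.le hlam.le) hSpnn
  have n4 : 0 ≤ lam^2*ρp*(ξ^2*Ap + Cp) := mul_nonneg (mul_nonneg (sq_nonneg lam) hρp.le)
    (add_nonneg (mul_nonneg (sq_nonneg ξ) hApnn) hCpnn)
  have n5 : 0 ≤ lam^2*ρp*(ξ^2*Am + Cm) := mul_nonneg (mul_nonneg (sq_nonneg lam) hρp.le)
    (add_nonneg (mul_nonneg (sq_nonneg ξ) hAmnn) hCmnn)
  have n6 : 0 ≤ lam^2*ρm*(ξ^2*Ap + Cp) := mul_nonneg (mul_nonneg (sq_nonneg lam) hρm.le)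
    (add_nonneg (mul_nonneg (sq_nonneg ξ) hApnn) hCpnn)
  have n7 : 0 ≤ B^2*ξ^2*(ξ^2*Ap) := mul_nonneg (mul_nonneg (sq_nonneg B) (sq_nonneg ξ))
    (mul_nonneg (sq_nonneg ξ) hApnn)
  have n8 : 0 ≤ B^2*ξ^2*(ξ^2*Am) := mul_nonneg (mul_nonneg (sq_nonneg B) (sq_nonneg ξ))
    (mul_nonneg (sq_nonneg ξ) hAmnn)
  have n9 : 0 ≤ lam^2*ρm*(ξ^2*Am) := mul_nonneg (mul_nonneg (sq_nonneg lam) hρm.le)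
    (mul_nonneg (sq_nonneg ξ) hAmnn)
  have n10 : 0 ≤ lam^2*ρp*Cp := mul_nonneg (mul_nonneg (sq_nonneg lam) hρp.le) hCpnn
  have hcoef : 0 < lam^2*ρm*ξ^2 + B^2*ξ^2*ξ^2 := by
    have c1 : 0 < lam^2*ρm*ξ^2 := mul_pos (mul_pos (pow_pos hlam 2) hρm) hξ2
    have c2 : 0 < B^2*ξ^2*ξ^2 := mul_pos (mul_pos hB2 hξ2) hξ2
    linarith
  have hAmle : (lam^2*ρm*ξ^2 + B^2*ξ^2*ξ^2) * Am ≤ 0 := by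
    linarith [key, hkeyξ, n1, n2, n3, n4, n7]
  have hAple : (lam^2*ρp*ξ^2 + B^2*ξ^2*ξ^2) * Ap ≤ 0 := by
    linarith [key, hkeyξ, n2, n3, n9, n1, n10, n8]
  have hcoefp : 0 < lam^2*ρp*ξ^2 + B^2*ξ^2*ξ^2 := by
    have c1 : 0 < lam^2*ρp*ξ^2 := mul_pos (mul_pos (pow_pos hlam 2) hρp) hξ2
    have c2 : 0 < B^2*ξ^2*ξ^2 := mul_pos (mul_pos hB2 hξ2) hξ2
    linarith
  have hAm0 : Am = 0 := by
    refine le_antisymm ?_ hAmnn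
    by_contra h
    push_neg at h
    linarith [mul_pos hcoef h]
  have hAp0 : Ap = 0 := by
    refine le_antisymm ?_ hApnn
    by_contra h
    push_neg at h
    linarith [mul_pos hcoefp h]
  -- hence ψ vanishes, contradiction
  have hzm := eq_zero_on_of_integral_sq_zero hcm (by norm_num : (-1:ℝ) < 0)
    (by rw [← hAmdef]; exact hAm0)
  have hzp := eq_zero_on_of_integral_sq_zero hcp (by norm_num : (0:ℝ) < 1)
    (by rw [← hApdef]; exact hAp0)
  rcases le_or_gt y0 0 with h | h
  · exact hy0ne (by rw [hrm y0 ⟨hy0.1, h⟩]; exact hzm y0 ⟨hy0.1, h⟩)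
  · exact hy0ne (by rw [hrp y0 ⟨h.le, hy0.2⟩]; exact hzp y0 ⟨h.le, hy0.2⟩)

end
end

section
/- The supremum defining the critical magnetic number is achieved: there exists a Lipschitz function φ : [−1,1] → ℝ with φ(−1) = φ(1) = 0, not almost everywhere zero, such that g[ρ]φ(0)² = |B|_c² · ∫_{−1}^{1} φ′(y)² dy. -/
open MeasureTheory Set Filter Topology

noncomputable section

namespace CriticalMagnetic


lemma ninv_tendsto : Tendsto (fun n : ℕ => ((n : ℝ) + 1)⁻¹) atTop (𝓝 0) := by
  simpa [one_div] using (tendsto_one_div_add_atTop_nhds_zero_nat : Tendsto (fun n : ℕ => 1 / ((n : ℝ) + 1)) atTop (𝓝 0))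

lemma intIntegrable {f : ℝ → ℝ} {K : ℝ} (hm : Measurable f) (hb : ∀ x, |f x| ≤ K)
    (a b : ℝ) : IntervalIntegrable f volume a b := by
  refine (intervalIntegrable_const (c := K)).mono_fun' hm.aestronglyMeasurable.restrict ?_
  exact ae_of_all _ fun x => by simpa [Real.norm_eq_abs] using hb x

lemma tendsto_avg {φ : ℝ → ℝ} {K : NNReal} (hφ : LipschitzWith K φ) (c : ℝ) :
    Tendsto (fun n : ℕ => ((n : ℝ) + 1) * ∫ x in c..(c + ((n:ℝ)+1)⁻¹), φ x) atTop (𝓝 (φ c)) := by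
  have key : ∀ n : ℕ, ‖((n : ℝ) + 1) * (∫ x in c..(c + ((n:ℝ)+1)⁻¹), φ x) - φ c‖
      ≤ (K : ℝ) * ((n:ℝ)+1)⁻¹ := by
    intro n
    set h : ℝ := ((n:ℝ)+1)⁻¹ with hh
    have hn : (0:ℝ) < (n:ℝ)+1 := by positivity
    have hh0 : 0 < h := by positivity
    have hnh : ((n:ℝ)+1) * h = 1 := mul_inv_cancel₀ (ne_of_gt hn)
    have hint : IntervalIntegrable φ volume c (c+h) := hφ.continuous.intervalIntegrable _ _
    have e1 : ((n:ℝ)+1) * (∫ x in c..(c+h), φ x) - φ c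
        = ((n:ℝ)+1) * ∫ x in c..(c+h), (φ x - φ c) := by
      rw [intervalIntegral.integral_sub hint intervalIntegrable_const,
        intervalIntegral.integral_const]
      have : c + h - c = h := by ring
      rw [this]
      rw [mul_sub]
      rw [smul_eq_mul, ← mul_assoc, hnh, one_mul]
    rw [e1]
    have hb : ∀ x ∈ Set.uIoc c (c+h), ‖φ x - φ c‖ ≤ (K : ℝ) * h := by
      intro x hx
      have hx' : x ∈ Set.Ioc c (c+h) := by
        rwa [Set.uIoc_of_le (by linarith : c ≤ c + h)] at hx
      have := hφ.dist_le_mul x c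
      rw [Real.dist_eq, Real.dist_eq] at this
      refine this.trans ?_
      have : |x - c| ≤ h := by
        rw [abs_of_nonneg (by linarith [hx'.1] : 0 ≤ x - c)]
        linarith [hx'.2]
      exact mul_le_mul_of_nonneg_left this K.coe_nonneg
    have hbnd := intervalIntegral.norm_integral_le_of_norm_le_const hb
    rw [norm_mul, Real.norm_eq_abs (((n:ℝ)+1)), abs_of_pos hn]
    have : |c + h - c| = h := by rw [show c + h - c = h by ring, abs_of_pos hh0]
    rw [this] at hbnd
    calc ((n:ℝ)+1) * ‖∫ x in c..(c+h), (φ x - φ c)‖ ≤ ((n:ℝ)+1) * ((K:ℝ) * h * h) :=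
          mul_le_mul_of_nonneg_left hbnd (le_of_lt hn)
      _ = (K:ℝ) * h := by rw [show ((n:ℝ)+1) * ((K:ℝ) * h * h) = (K:ℝ) * h * (((n:ℝ)+1) * h) by ring, hnh, mul_one]
  have hK0 : Tendsto (fun n : ℕ => (K : ℝ) * ((n:ℝ)+1)⁻¹) atTop (𝓝 0) := by
    simpa using tendsto_const_nhds.mul ninv_tendsto
  have := squeeze_zero_norm key hK0
  have := this.add_const (φ c)
  simpa using this


lemma lip_ftc {φ : ℝ → ℝ} {K : NNReal} (hφ : LipschitzWith K φ) (a b : ℝ) :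
    ∫ y in a..b, deriv φ y = φ b - φ a := by
  set F : ℕ → ℝ → ℝ := fun n x => ((n:ℝ)+1) * (φ (x + ((n:ℝ)+1)⁻¹) - φ x) with hF
  have hcont : Continuous φ := hφ.continuous
  -- limit of integrals of F n is the integral of deriv φ, by dominated convergence
  have hmeas : ∀ n : ℕ, AEStronglyMeasurable (F n) (volume.restrict (Set.uIoc a b)) := fun n =>
    (continuous_const.mul ((hcont.comp (continuous_add_right _)).sub hcont)).aestronglyMeasurable
  have hbound : ∀ n : ℕ, ∀ᵐ x ∂(volume : Measure ℝ), x ∈ Set.uIoc a b → ‖F n x‖ ≤ (K:ℝ) := by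
    intro n
    refine ae_of_all _ fun x _ => ?_
    have hn : (0:ℝ) < (n:ℝ)+1 := by positivity
    have h1 : |φ (x + ((n:ℝ)+1)⁻¹) - φ x| ≤ (K:ℝ) * ((n:ℝ)+1)⁻¹ := by
      have := hφ.dist_le_mul (x + ((n:ℝ)+1)⁻¹) x
      rw [Real.dist_eq, Real.dist_eq] at this
      simpa [abs_of_pos (show (0:ℝ) < ((n:ℝ)+1)⁻¹ by positivity)] using this
    rw [hF]
    simp only [Real.norm_eq_abs, abs_mul, abs_of_pos hn]
    calc ((n:ℝ)+1) * |φ (x + ((n:ℝ)+1)⁻¹) - φ x| ≤ ((n:ℝ)+1) * ((K:ℝ) * ((n:ℝ)+1)⁻¹) :=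
          mul_le_mul_of_nonneg_left h1 (le_of_lt hn)
      _ = (K:ℝ) := by field_simp
  have hlim : ∀ᵐ x ∂(volume : Measure ℝ), x ∈ Set.uIoc a b →
      Tendsto (fun n => F n x) atTop (𝓝 (deriv φ x)) := by
    filter_upwards [hφ.ae_differentiableAt] with x hx _
    have hslope := hasDerivAt_iff_tendsto_slope.mp hx.hasDerivAt
    have hseq : Tendsto (fun n : ℕ => x + ((n:ℝ)+1)⁻¹) atTop (𝓝[≠] x) := by
      refine tendsto_nhdsWithin_of_tendsto_nhds_of_eventually_within _ ?_ ?_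
      · simpa using tendsto_const_nhds.add ninv_tendsto
      · refine Eventually.of_forall fun n => ?_
        have : (0:ℝ) < ((n:ℝ)+1)⁻¹ := by positivity
        simp only [Set.mem_compl_iff, Set.mem_singleton_iff]
        intro h
        nlinarith [this]
    have := hslope.comp hseq
    convert this using 1
    funext n
    have hn : ((n:ℝ)+1)⁻¹ ≠ 0 := by positivity
    simp only [Function.comp_apply, slope_def_field, hF]
    field_simp
    ring
  have hDCT := intervalIntegral.tendsto_integral_filter_of_dominated_convergence
      (μ := volume) (a := a) (b := b) (f := fun x => deriv φ x) (F := F)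
      (fun _ => (K:ℝ)) (Eventually.of_forall hmeas) (Eventually.of_forall hbound)
      intervalIntegrable_const hlim
  -- Compute ∫ F n explicitly
  have hcomp : ∀ n : ℕ, (∫ x in a..b, F n x) =
      ((n:ℝ)+1) * (∫ x in b..(b + ((n:ℝ)+1)⁻¹), φ x) -
      ((n:ℝ)+1) * (∫ x in a..(a + ((n:ℝ)+1)⁻¹), φ x) := by
    intro n
    set h : ℝ := ((n:ℝ)+1)⁻¹ with hh
    have hint : ∀ c d : ℝ, IntervalIntegrable φ volume c d := fun c d =>
      hcont.intervalIntegrable _ _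
    have hint2 : IntervalIntegrable (fun x => φ (x + h)) volume a b :=
      (hcont.comp (continuous_add_right _)).intervalIntegrable _ _
    have e1 : (∫ x in a..b, F n x)
        = ((n:ℝ)+1) * ((∫ x in a..b, φ (x + h)) - ∫ x in a..b, φ x) := by
      rw [hF]
      simp only []
      rw [← intervalIntegral.integral_sub hint2 (hint a b)]
      rw [intervalIntegral.integral_const_mul]
    rw [e1, intervalIntegral.integral_comp_add_right]
    have e2 : (∫ x in (a+h)..(b+h), φ x) - ∫ x in a..b, φ x
        = (∫ x in (a+h)..a, φ x) - ∫ x in (b+h)..b, φ x :=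
      intervalIntegral.integral_interval_sub_interval_comm (hint _ _) (hint _ _) (hint _ _)
    rw [e2]
    rw [intervalIntegral.integral_symm a (a+h), intervalIntegral.integral_symm b (b+h)]
    ring
  -- limit of the explicit expression
  have hlim2 : Tendsto (fun n : ℕ => ∫ x in a..b, F n x) atTop (𝓝 (φ b - φ a)) := by
    have := (tendsto_avg hφ b).sub (tendsto_avg hφ a)
    refine this.congr fun n => (hcomp n).symm
  exact (tendsto_nhds_unique hDCT hlim2)


lemma cauchy_schwarz {f : ℝ → ℝ} {K : ℝ} (hm : Measurable f) (hb : ∀ x, |f x| ≤ K)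
    {a b : ℝ} (hab : a ≤ b) :
    (∫ x in a..b, f x) ^ 2 ≤ (b - a) * ∫ x in a..b, (f x) ^ 2 := by
  have hm2 : Measurable fun x => (f x)^2 := hm.pow_const 2
  have hb2 : ∀ x, |(f x)^2| ≤ K^2 := fun x => by
    rw [abs_of_nonneg (sq_nonneg _)]
    nlinarith [hb x, abs_nonneg (f x), sq_abs (f x)]
  have hif : IntervalIntegrable f volume a b := intIntegrable hm hb a b
  have hif2 : IntervalIntegrable (fun x => (f x)^2) volume a b := intIntegrable hm2 hb2 a b
  rcases eq_or_lt_of_le hab with h0 | hlt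
  · subst h0; simp
  · have hL0 : (0:ℝ) < b - a := by linarith
    set Iv : ℝ := ∫ x in a..b, f x with hIv
    set Jv : ℝ := ∫ x in a..b, (f x)^2 with hJv
    set c : ℝ := Iv / (b - a) with hc
    have key : (0:ℝ) ≤ ∫ x in a..b, (f x - c)^2 :=
      intervalIntegral.integral_nonneg hab (fun x _ => sq_nonneg _)
    have expand : (∫ x in a..b, (f x - c)^2) = Jv - 2*c*Iv + c^2 * (b - a) := by
      have he : ∀ x, (f x - c)^2 = (f x)^2 - (2*c) * f x + c^2 := fun x => by ring
      simp_rw [he]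
      rw [intervalIntegral.integral_add (hif2.sub (hif.const_mul _)) intervalIntegrable_const,
        intervalIntegral.integral_sub hif2 (hif.const_mul _),
        intervalIntegral.integral_const_mul, intervalIntegral.integral_const]
      rw [smul_eq_mul]
      ring
    rw [expand] at key
    have hcc : 2*c*Iv - c^2*(b-a) = Iv^2 / (b-a) := by
      rw [hc]; field_simp; ring
    have hkey2 : Iv^2 / (b-a) ≤ Jv := by linarith
    calc Iv^2 = (b-a) * (Iv^2 / (b-a)) := by field_simp
      _ ≤ (b-a) * Jv := mul_le_mul_of_nonneg_left hkey2 (le_of_lt hL0)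

lemma sq_deriv_integrable {φ : ℝ → ℝ} {K : NNReal} (hφ : LipschitzWith K φ) (a b : ℝ) :
    IntervalIntegrable (fun y => (deriv φ y)^2) volume a b := by
  have hdm : Measurable (deriv φ) := measurable_deriv φ
  have hdb : ∀ x, |deriv φ x| ≤ (K:ℝ) := fun x => by
    simpa [Real.norm_eq_abs] using norm_deriv_le_of_lipschitz hφ (x₀ := x)
  exact intIntegrable (K := (K:ℝ)^2) (hdm.pow_const 2) (fun x => by
    rw [abs_of_nonneg (sq_nonneg _)]
    nlinarith [hdb x, abs_nonneg (deriv φ x), sq_abs (deriv φ x)]) a b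

lemma bcset_upper {g ρp ρm : ℝ} (hρ : ρm < ρp) (hg : 0 < g) :
    ∀ r ∈ {r | ∃ φ : ℝ → ℝ, (∃ K, LipschitzWith K φ) ∧ φ (-1) = 0 ∧ φ 1 = 0 ∧
    ¬ (∀ᵐ y ∂(volume.restrict (Icc (-1:ℝ) 1)), φ y = 0) ∧
    r = g * (ρp - ρm) * (φ 0) ^ 2 / ∫ y in (-1:ℝ)..1, (deriv φ y) ^ 2},
      r ≤ g * (ρp - ρm) / 2 := by
  rintro r ⟨φ, ⟨K, hφ⟩, hm1, hp1, -, hr⟩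
  have hgρ : 0 < g * (ρp - ρm) := by nlinarith
  have hdm : Measurable (deriv φ) := measurable_deriv φ
  have hdb : ∀ x, |deriv φ x| ≤ (K:ℝ) := fun x => by
    simpa [Real.norm_eq_abs] using norm_deriv_le_of_lipschitz hφ (x₀ := x)
  have hsplit : (∫ y in (-1:ℝ)..1, (deriv φ y)^2)
      = (∫ y in (-1:ℝ)..0, (deriv φ y)^2) + ∫ y in (0:ℝ)..1, (deriv φ y)^2 :=
    (intervalIntegral.integral_add_adjacent_intervals
      (sq_deriv_integrable hφ _ _) (sq_deriv_integrable hφ _ _)).symm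
  have hcs1 : (φ 0)^2 ≤ ∫ y in (-1:ℝ)..0, (deriv φ y)^2 := by
    have h := cauchy_schwarz hdm hdb (by norm_num : (-1:ℝ) ≤ 0)
    rw [lip_ftc hφ (-1) 0, hm1, sub_zero] at h
    linarith
  have hcs2 : (φ 0)^2 ≤ ∫ y in (0:ℝ)..1, (deriv φ y)^2 := by
    have h := cauchy_schwarz hdm hdb (by norm_num : (0:ℝ) ≤ 1)
    rw [lip_ftc hφ 0 1, hp1, zero_sub] at h
    have h2 : (-φ 0)^2 = (φ 0)^2 := by ring
    rw [h2] at h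
    linarith
  have hI2 : 2 * (φ 0)^2 ≤ ∫ y in (-1:ℝ)..1, (deriv φ y)^2 := by
    rw [hsplit]; linarith
  have hI0 : 0 ≤ ∫ y in (-1:ℝ)..1, (deriv φ y)^2 := by nlinarith [sq_nonneg (φ 0)]
  rcases eq_or_lt_of_le hI0 with h0 | hpos
  · have hφ0 : (φ 0)^2 = 0 := by nlinarith [sq_nonneg (φ 0)]
    rw [hr, hφ0, mul_zero, zero_div]
    positivity
  · rw [hr, div_le_iff₀ hpos]
    nlinarith [mul_nonneg (le_of_lt hgρ)
      (by linarith : (0:ℝ) ≤ (∫ y in (-1:ℝ)..1, (deriv φ y)^2) - 2 * (φ 0)^2)]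


def tent : ℝ → ℝ := fun y => 1 - |y|

lemma tent_lip : LipschitzWith 1 tent := by
  refine LipschitzWith.of_dist_le_mul fun x y => ?_
  rw [Real.dist_eq, Real.dist_eq, NNReal.coe_one, one_mul]
  have : tent x - tent y = |y| - |x| := by simp [tent]
  rw [this]
  calc |(|y| - |x|)| ≤ |y - x| := abs_abs_sub_abs_le_abs_sub y x
    _ = |x - y| := abs_sub_comm y x

lemma tent_deriv_pos {y : ℝ} (hy : 0 < y) : deriv tent y = -1 := by
  have hev : tent =ᶠ[𝓝 y] fun z => 1 - z := by
    filter_upwards [Ioi_mem_nhds hy] with z hz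
    simp [tent, abs_of_pos (Set.mem_Ioi.mp hz)]
  rw [hev.deriv_eq]
  have h : HasDerivAt (fun z : ℝ => 1 - z) (-1) y := by
    simpa using (hasDerivAt_id y).const_sub 1
  exact h.deriv

lemma tent_deriv_neg {y : ℝ} (hy : y < 0) : deriv tent y = 1 := by
  have hev : tent =ᶠ[𝓝 y] fun z => 1 + z := by
    filter_upwards [Iio_mem_nhds hy] with z hz
    simp [tent, abs_of_neg (Set.mem_Iio.mp hz)]
  rw [hev.deriv_eq]
  have h : HasDerivAt (fun z : ℝ => 1 + z) 1 y := by
    simpa using (hasDerivAt_id y).const_add 1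
  exact h.deriv

lemma tent_int1 : ∫ y in (0:ℝ)..1, (deriv tent y)^2 = 1 := by
  rw [intervalIntegral.integral_of_le (by norm_num : (0:ℝ) ≤ 1),
    setIntegral_congr_fun measurableSet_Ioc (g := fun _ => (1:ℝ))
      (fun y hy => by rw [tent_deriv_pos hy.1]; norm_num)]
  simp

lemma tent_int2 : ∫ y in (-1:ℝ)..0, (deriv tent y)^2 = 1 := by
  rw [intervalIntegral.integral_of_le (by norm_num : (-1:ℝ) ≤ 0)]
  have hne : ∀ᵐ y : ℝ ∂(volume : Measure ℝ), y ≠ 0 := by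
    rw [Filter.eventually_iff, mem_ae_iff]
    have : {y : ℝ | y ≠ 0}ᶜ = {(0:ℝ)} := by ext y; simp
    rw [this]
    exact measure_singleton 0
  rw [setIntegral_congr_ae measurableSet_Ioc (g := fun _ => (1:ℝ)) ?_]
  · simp
  · filter_upwards [hne] with y hy hmem
    have : y < 0 := lt_of_le_of_ne hmem.2 hy
    rw [tent_deriv_neg this]; norm_num

lemma tent_ne : ¬ (∀ᵐ y ∂(volume.restrict (Icc (-1:ℝ) 1)), tent y = 0) := by
  intro h
  rw [ae_iff] at h
  have hsub : Set.Ioo (0:ℝ) 1 ⊆ {y | ¬ tent y = 0} := by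
    intro y hy
    simp only [Set.mem_setOf_eq, tent]
    have h1 : |y| < 1 := abs_lt.mpr ⟨by linarith [hy.1], hy.2⟩
    intro hc; linarith
  have h2 := measure_mono_null hsub h
  rw [Measure.restrict_apply' measurableSet_Icc] at h2
  have hint : Set.Ioo (0:ℝ) 1 ∩ Set.Icc (-1:ℝ) 1 = Set.Ioo 0 1 := by
    ext y
    constructor
    · exact fun hy => hy.1
    · exact fun hy => ⟨hy, ⟨by linarith [hy.1], le_of_lt hy.2⟩⟩
  rw [hint, Real.volume_Ioo] at h2
  norm_num at h2

end CriticalMagnetic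

/-- the supremum defining the critical magnetic number is achieved. -/
theorem critical_magnetic_number_achieved
    (ρp ρm g Bc : ℝ)
    (hρm : 0 < ρm) (hρ : ρm < ρp) (hg : 0 < g)
    (hBc : 0 < Bc) (hBcsq : Bc ^ 2 = sSup (BcSet g ρp ρm)) :
    ∃ φ : ℝ → ℝ, (∃ K, LipschitzWith K φ) ∧ φ (-1) = 0 ∧ φ 1 = 0 ∧
      ¬ (∀ᵐ y ∂(volume.restrict (Icc (-1:ℝ) 1)), φ y = 0) ∧
      g * (ρp - ρm) * (φ 0) ^ 2 = Bc ^ 2 * ∫ y in (-1:ℝ)..1, (deriv φ y) ^ 2 := by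
  classical
  open CriticalMagnetic in
  have hub : ∀ r ∈ BcSet g ρp ρm, r ≤ g * (ρp - ρm) / 2 := CriticalMagnetic.bcset_upper hρ hg
  have htot : ∫ y in (-1:ℝ)..1, (deriv CriticalMagnetic.tent y) ^ 2 = 2 := by
    rw [← intervalIntegral.integral_add_adjacent_intervals
      (CriticalMagnetic.sq_deriv_integrable CriticalMagnetic.tent_lip (-1) 0)
      (CriticalMagnetic.sq_deriv_integrable CriticalMagnetic.tent_lip 0 1),
      CriticalMagnetic.tent_int1, CriticalMagnetic.tent_int2]
    norm_num
  have hmem : g * (ρp - ρm) / 2 ∈ BcSet g ρp ρm := by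
    refine ⟨CriticalMagnetic.tent, ⟨1, CriticalMagnetic.tent_lip⟩, ?_, ?_, CriticalMagnetic.tent_ne, ?_⟩
    · simp [CriticalMagnetic.tent]
    · simp [CriticalMagnetic.tent]
    · rw [htot]
      simp [CriticalMagnetic.tent]
  have hBdd : BddAbove (BcSet g ρp ρm) := ⟨_, hub⟩
  have hsup : sSup (BcSet g ρp ρm) = g * (ρp - ρm) / 2 :=
    le_antisymm (csSup_le ⟨_, hmem⟩ hub) (le_csSup hBdd hmem)
  refine ⟨CriticalMagnetic.tent, ⟨1, CriticalMagnetic.tent_lip⟩, ?_, ?_, CriticalMagnetic.tent_ne, ?_⟩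
  · simp [CriticalMagnetic.tent]
  · simp [CriticalMagnetic.tent]
  · rw [htot, hBcsq, hsup]
    have h0 : CriticalMagnetic.tent 0 = 1 := by simp [CriticalMagnetic.tent]
    rw [h0]
    ring

end
end

section
/- Regarded as a function of the magnetic number B on the interval (0, |B|_c), the vertical critical frequency satisfies the limits: |ξ|_{vc}^B → 0 as B → 0⁺, and |ξ|_{vc}^B → +∞ as B → |B|_c⁻. -/
open MeasureTheory Set Filter Topology

noncomputable section

lemma cs_interval {f : ℝ → ℝ} {a c : ℝ} (hac : a ≤ c)
    (h1 : IntervalIntegrable f volume a c)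
    (h2 : IntervalIntegrable (fun x => f x ^ 2) volume a c) :
    (∫ x in a..c, f x) ^ 2 ≤ (c - a) * ∫ x in a..c, f x ^ 2 := by
  rcases eq_or_lt_of_le hac with h | h
  · subst h; simp
  set I := ∫ x in a..c, f x with hI
  set J := ∫ x in a..c, f x ^ 2 with hJ
  set L := c - a with hL
  have hL0 : 0 < L := by simp [hL]; linarith
  have key : 0 ≤ ∫ x in a..c, (L * f x - I) ^ 2 :=
    intervalIntegral.integral_nonneg hac (fun x _ => sq_nonneg _)
  have expand : ∫ x in a..c, (L * f x - I) ^ 2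
      = L ^ 2 * J - 2 * L * I * I + I ^ 2 * L := by
    have : ∀ x, (L * f x - I) ^ 2 = L ^ 2 * f x ^ 2 - (2 * L * I) * f x + I ^ 2 := by
      intro x; ring
    rw [intervalIntegral.integral_congr (fun x _ => this x)]
    rw [intervalIntegral.integral_add, intervalIntegral.integral_sub]
    · simp [intervalIntegral.integral_const, intervalIntegral.integral_const_mul, hI, hJ, hL]; ring
    · exact h2.const_mul _
    · exact h1.const_mul _
    · exact (h2.const_mul _).sub (h1.const_mul _)
    · exact intervalIntegrable_const
  rw [expand] at key
  nlinarith [sq_nonneg I]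


lemma deriv_abs_le {f : ℝ → ℝ} {K : NNReal} (hf : LipschitzWith K f) (x : ℝ) :
    |deriv f x| ≤ K := by
  have h := norm_fderiv_le_of_lipschitz ℝ hf (x₀ := x)
  rw [show deriv f x = fderiv ℝ f x 1 from rfl]
  calc |fderiv ℝ f x 1| ≤ ‖fderiv ℝ f x‖ * ‖(1:ℝ)‖ := (fderiv ℝ f x).le_opNorm 1
  _ ≤ K := by simpa using h

lemma intervalIntegrable_deriv_lip {f : ℝ → ℝ} {K : NNReal} (hf : LipschitzWith K f)
    (a b : ℝ) : IntervalIntegrable (deriv f) volume a b := by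
  refine (intervalIntegrable_const (c := (K:ℝ))).mono_fun
    ((measurable_deriv f).aestronglyMeasurable) ?_
  exact Filter.Eventually.of_forall (fun x => by simpa using deriv_abs_le hf x)

lemma intervalIntegrable_deriv_sq_lip {f : ℝ → ℝ} {K : NNReal} (hf : LipschitzWith K f)
    (a b : ℝ) : IntervalIntegrable (fun x => (deriv f x)^2) volume a b := by
  refine (intervalIntegrable_const (c := ((K:ℝ)^2))).mono_fun
    (((measurable_deriv f).pow_const 2).aestronglyMeasurable) ?_
  refine Filter.Eventually.of_forall (fun x => ?_)
  have h := deriv_abs_le hf x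
  have h0 : (0:ℝ) ≤ |deriv f x| := abs_nonneg _
  simp only [Real.norm_eq_abs, abs_pow]
  calc |deriv f x|^2 ≤ (K:ℝ)^2 := pow_le_pow_left₀ h0 h 2
  _ = |(K:ℝ)|^2 := by rw [abs_of_nonneg K.coe_nonneg]


lemma tendsto_seq_nhdsNe (x : ℝ) :
    Tendsto (fun n : ℕ => x + 1/(n+1 : ℝ)) atTop (𝓝[≠] x) := by
  apply tendsto_nhdsWithin_of_tendsto_nhds_of_eventually_within
  · have : Tendsto (fun n : ℕ => 1/(n+1 : ℝ)) atTop (𝓝 0) := tendsto_one_div_add_atTop_nhds_zero_nat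
    simpa using tendsto_const_nhds.add this
  · refine Filter.Eventually.of_forall (fun n => ?_)
    have : (0:ℝ) < 1/(n+1 : ℝ) := by positivity
    simp only [Set.mem_compl_iff, Set.mem_singleton_iff]
    intro h; nlinarith [h]

lemma slope_tendsto_deriv {f : ℝ → ℝ} {x : ℝ} (h : DifferentiableAt ℝ f x) :
    Tendsto (fun n : ℕ => (f (x + 1/(n+1:ℝ)) - f x) * (n+1:ℝ)) atTop (𝓝 (deriv f x)) := by
  have hs := hasDerivAt_iff_tendsto_slope.1 h.hasDerivAt
  have := hs.comp (tendsto_seq_nhdsNe x)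
  refine this.congr (fun n => ?_)
  have hn : (1/(n+1:ℝ)) ≠ 0 := by positivity
  simp only [Function.comp, slope_def_field]
  field_simp
  ring



lemma lipschitz_ftc {f : ℝ → ℝ} {K : NNReal} (hf : LipschitzWith K f) {a b : ℝ}
    (hab : a ≤ b) : ∫ x in a..b, deriv f x = f b - f a := by
  have hcont : Continuous f := hf.continuous
  set F : ℕ → ℝ → ℝ := fun n x => (f (x + 1/(n+1:ℝ)) - f x) * (n+1:ℝ) with hF
  -- convergence of integrals to ∫ deriv
  have hconv : Tendsto (fun n => ∫ x in a..b, F n x) atTop (𝓝 (∫ x in a..b, deriv f x)) := by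
    apply intervalIntegral.tendsto_integral_filter_of_dominated_convergence (bound := fun _ => (K:ℝ))
    · refine Filter.Eventually.of_forall (fun n => ?_)
      exact ((hcont.comp (continuous_id.add continuous_const)).sub hcont).mul
        continuous_const |>.aestronglyMeasurable
    · refine Filter.Eventually.of_forall (fun n => ?_)
      refine Filter.Eventually.of_forall (fun x _ => ?_)
      have h1 : |f (x + 1/(n+1:ℝ)) - f x| ≤ K * (1/(n+1:ℝ)) := by
        have := hf.dist_le_mul (x + 1/(n+1:ℝ)) x
        have h0 : (0:ℝ) < (n:ℝ)+1 := by positivity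
        simpa [Real.dist_eq, abs_of_pos h0, one_div] using this
      have hn : (0:ℝ) < (n+1:ℝ) := by positivity
      rw [Real.norm_eq_abs, hF, abs_mul, abs_of_pos hn]
      calc |f (x + 1/(n+1:ℝ)) - f x| * (n+1:ℝ) ≤ (K * (1/(n+1:ℝ))) * (n+1:ℝ) := by
            exact mul_le_mul_of_nonneg_right h1 hn.le
      _ = K := by field_simp
    · exact intervalIntegrable_const
    · have hae := hf.ae_differentiableAt (μ := volume)
      have : ∀ᵐ x : ℝ, x ∈ Set.uIoc a b → Tendsto (fun n => F n x) atTop (𝓝 (deriv f x)) := by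
        filter_upwards [hae] with x hx _
        exact slope_tendsto_deriv hx
      exact this
  -- value of the integrals
  have hint : ∀ c d : ℝ, IntervalIntegrable f volume c d := fun c d =>
    hcont.intervalIntegrable c d
  have hval : ∀ n : ℕ, ∫ x in a..b, F n x
      = ((∫ x in b..(b + 1/(n+1:ℝ)), f x) - ∫ x in a..(a + 1/(n+1:ℝ)), f x) * (n+1:ℝ) := by
    intro n
    set h : ℝ := 1/(n+1:ℝ) with hh
    have e1 : ∫ x in a..b, F n x = ((∫ x in a..b, f (x + h)) - ∫ x in a..b, f x) * (n+1:ℝ) := by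
      rw [hF]
      simp only []
      rw [show (fun x => (f (x + h) - f x) * (n+1:ℝ)) = fun x => ((n:ℝ)+1) • (f (x+h) - f x) from by
        funext x; simp [smul_eq_mul]; ring]
      rw [intervalIntegral.integral_smul, intervalIntegral.integral_sub
        (by exact (hcont.comp (continuous_id.add continuous_const)).intervalIntegrable a b) (hint a b)]
      simp [smul_eq_mul]; ring
    rw [e1, intervalIntegral.integral_comp_add_right f h]
    have e2 : ∫ x in (a+h)..(b+h), f x = (∫ x in (a+h)..b, f x) + ∫ x in b..(b+h), f x :=
      (intervalIntegral.integral_add_adjacent_intervals (hint _ _) (hint _ _)).symm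
    have e3 : ∫ x in a..b, f x = (∫ x in a..(a+h), f x) + ∫ x in (a+h)..b, f x :=
      (intervalIntegral.integral_add_adjacent_intervals (hint _ _) (hint _ _)).symm
    rw [e2, e3]; ring
  -- limits of endpoint averages
  have hend : ∀ c : ℝ, Tendsto (fun n : ℕ => (∫ x in c..(c + 1/(n+1:ℝ)), f x) * (n+1:ℝ))
      atTop (𝓝 (f c)) := by
    intro c
    have hG : HasDerivAt (fun u => ∫ x in c..u, f x) (f c) c :=
      intervalIntegral.integral_hasDerivAt_right (hint c c)
        (hcont.stronglyMeasurableAtFilter _ _) hcont.continuousAt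
    have hs := hasDerivAt_iff_tendsto_slope.1 hG
    have := hs.comp (tendsto_seq_nhdsNe c)
    refine this.congr (fun n => ?_)
    have hn : (1/(n+1:ℝ)) ≠ 0 := by positivity
    simp only [Function.comp, slope_def_field]
    rw [intervalIntegral.integral_same, sub_zero,
      show c + 1/(n+1:ℝ) - c = 1/(n+1:ℝ) from by ring]
    have hn' : ((n:ℝ)+1) ≠ 0 := by positivity
    rw [div_eq_iff (by positivity : (1/((n:ℝ)+1)) ≠ 0)]
    field_simp
  have h2 : Tendsto (fun n => ∫ x in a..b, F n x) atTop (𝓝 (f b - f a)) := by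
    have h3 := ((hend b).sub (hend a))
    refine h3.congr (fun n => ?_)
    rw [hval n]; ring
  exact tendsto_nhds_unique hconv h2



lemma bcset_le {g ρp ρm : ℝ} (hgρ : 0 < g * (ρp - ρm)) {r : ℝ}
    (hr : r ∈ BcSet g ρp ρm) : r ≤ g * (ρp - ρm) / 2 := by
  obtain ⟨φ, ⟨K, hK⟩, hm1, h1, -, hreq⟩ := hr
  set D := ∫ y in (-1:ℝ)..1, (deriv φ y) ^ 2 with hD
  have hD0 : 0 ≤ D := intervalIntegral.integral_nonneg (by norm_num) (fun x _ => sq_nonneg _)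
  rcases eq_or_lt_of_le hD0 with h | h
  · rw [hreq, ← h, div_zero]; positivity
  · have hsplit : (∫ y in (-1:ℝ)..0, (deriv φ y)^2) + ∫ y in (0:ℝ)..1, (deriv φ y)^2 = D :=
      intervalIntegral.integral_add_adjacent_intervals
        (intervalIntegrable_deriv_sq_lip hK _ _) (intervalIntegrable_deriv_sq_lip hK _ _)
    have hft1 : ∫ y in (-1:ℝ)..0, deriv φ y = φ 0 := by
      rw [lipschitz_ftc hK (by norm_num), hm1, sub_zero]
    have hft2 : ∫ y in (0:ℝ)..1, deriv φ y = - φ 0 := by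
      rw [lipschitz_ftc hK (by norm_num), h1, zero_sub]
    have hcs1 := cs_interval (by norm_num : (-1:ℝ) ≤ 0)
      (intervalIntegrable_deriv_lip hK _ _) (intervalIntegrable_deriv_sq_lip hK _ _)
    have hcs2 := cs_interval (by norm_num : (0:ℝ) ≤ 1)
      (intervalIntegrable_deriv_lip hK _ _) (intervalIntegrable_deriv_sq_lip hK _ _)
    rw [hft1] at hcs1; rw [hft2] at hcs2
    have h2φ : 2 * (φ 0)^2 ≤ D := by nlinarith [hcs1, hcs2, hsplit]
    rw [hreq, div_le_iff₀ h]
    nlinarith [sq_nonneg (φ 0)]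


-- φ₀ y = (1-y^2)^2 = 1 - 2y^2 + y^4
noncomputable def φ₀ : ℝ → ℝ := fun y => 1 - 2*y^2 + y^4

lemma φ₀_hasDeriv (y : ℝ) : HasDerivAt φ₀ (-4*y + 4*y^3) y := by
  have h1 : HasDerivAt (fun y : ℝ => 1 - 2*y^2 + y^4) (0 - 2*(2*y) + 4*y^3) y := by
    exact (((hasDerivAt_const y (1:ℝ)).sub ((hasDerivAt_pow 2 y).const_mul 2)).add
      (hasDerivAt_pow 4 y)).congr_deriv (by push_cast; ring)
  exact h1.congr_deriv (by ring)

lemma φ₀_deriv : deriv φ₀ = fun y => -4*y + 4*y^3 := funext fun y => (φ₀_hasDeriv y).deriv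

lemma φ₀_deriv2 : deriv (deriv φ₀) = fun y => -4 + 12*y^2 := by
  rw [φ₀_deriv]
  funext y
  have h1 : HasDerivAt (fun y : ℝ => -4*y + 4*y^3) (-4*1 + 4*(3*y^2)) y := by
    exact ((hasDerivAt_id y).const_mul (-4)).add ((hasDerivAt_pow 3 y).const_mul 4) |>.congr_deriv
      (by push_cast; ring)
  rw [h1.deriv]; ring

lemma φ₀_contDiff : ContDiff ℝ 2 φ₀ := by
  unfold φ₀
  fun_prop

lemma φ₀_int1 : ∫ y in (-1:ℝ)..1, (deriv φ₀ y)^2 = 256/105 := by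
  rw [φ₀_deriv]
  have : ∀ y : ℝ, (-4*y + 4*y^3)^2 = 16*y^2 - 32*y^4 + 16*y^6 := fun y => by ring
  rw [intervalIntegral.integral_congr (fun y _ => this y)]
  have i2 : IntervalIntegrable (fun y : ℝ => 16*y^2) volume (-1) 1 := by
    apply Continuous.intervalIntegrable; continuity
  have i4 : IntervalIntegrable (fun y : ℝ => 32*y^4) volume (-1) 1 := by
    apply Continuous.intervalIntegrable; continuity
  have i6 : IntervalIntegrable (fun y : ℝ => 16*y^6) volume (-1) 1 := by
    apply Continuous.intervalIntegrable; continuity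
  rw [intervalIntegral.integral_add (i2.sub i4) i6, intervalIntegral.integral_sub i2 i4]
  simp only [intervalIntegral.integral_const_mul, integral_pow]
  norm_num
lemma φ₀_int2 : ∫ y in (-1:ℝ)..1, (deriv (deriv φ₀) y)^2 = 128/5 := by
  rw [φ₀_deriv2]
  have : ∀ y : ℝ, (-4 + 12*y^2)^2 = 16 - 96*y^2 + 144*y^4 := fun y => by ring
  rw [intervalIntegral.integral_congr (fun y _ => this y)]
  have i0 : IntervalIntegrable (fun _ : ℝ => (16:ℝ)) volume (-1) 1 := intervalIntegrable_const
  have i2 : IntervalIntegrable (fun y : ℝ => 96*y^2) volume (-1) 1 := by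
    apply Continuous.intervalIntegrable; continuity
  have i4 : IntervalIntegrable (fun y : ℝ => 144*y^4) volume (-1) 1 := by
    apply Continuous.intervalIntegrable; continuity
  rw [intervalIntegral.integral_add (i0.sub i2) i4, intervalIntegral.integral_sub i0 i2]
  simp only [intervalIntegral.integral_const_mul, integral_pow, intervalIntegral.integral_const]
  norm_num


lemma family_exists {η : ℝ} (hη0 : 0 < η) (hη1 : η < 1) :
    ∃ φ : ℝ → ℝ, ContDiff ℝ 2 φ ∧ φ (-1) = 0 ∧ φ 1 = 0 ∧ deriv φ (-1) = 0 ∧ deriv φ 1 = 0 ∧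
      1 - η ≤ φ 0 ∧ (∫ y in (-1:ℝ)..1, (deriv φ y)^2) ≤ 2 := by
  classical
  set ε : ℝ := η/2 with hε
  have hε0 : 0 < ε := by positivity
  obtain ⟨n, hn⟩ : ∃ n : ℕ, (2:ℝ)/η ≤ 2*n+1 := by
    obtain ⟨n, hn⟩ := exists_nat_ge ((2:ℝ)/η)
    exact ⟨n, by push_cast; linarith⟩
  have hn1 : (1:ℝ)/(2*n+1) ≤ η/2 := by
    rw [div_le_iff₀ (by positivity)]
    rw [div_le_iff₀ hη0] at hn
    nlinarith
  set u : ℝ → ℝ := fun t => t*(1-t^(2*n)) / Real.sqrt (t^2+ε^2) with hu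
  have hsq : ∀ t : ℝ, (0:ℝ) < t^2 + ε^2 := fun t => by positivity
  have hsqrtpos : ∀ t : ℝ, 0 < Real.sqrt (t^2+ε^2) := fun t => Real.sqrt_pos.2 (hsq t)
  have hden : ContDiff ℝ 1 (fun t : ℝ => Real.sqrt (t^2+ε^2)) := by
    rw [contDiff_iff_contDiffAt]; intro t
    exact (Real.contDiffAt_sqrt (hsq t).ne').comp t (by fun_prop)
  have hucd : ContDiff ℝ 1 u := by
    apply ContDiff.div (by fun_prop) hden (fun t => (hsqrtpos t).ne')
  have hucont : Continuous u := hucd.continuous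
  have huint : ∀ a b : ℝ, IntervalIntegrable u volume a b := fun a b =>
    hucont.intervalIntegrable a b
  -- φ and its derivative
  set φ : ℝ → ℝ := fun y => ∫ t in y..(1:ℝ), u t with hφ
  have hφd : ∀ y : ℝ, HasDerivAt φ (-u y) y := by
    intro y
    have h1 : HasDerivAt (fun v => ∫ t in (1:ℝ)..v, u t) (u y) y :=
      intervalIntegral.integral_hasDerivAt_right (huint 1 y)
        (hucont.stronglyMeasurableAtFilter _ _) hucont.continuousAt
    have : φ = fun v => -∫ t in (1:ℝ)..v, u t := by
      funext v; rw [hφ]; exact intervalIntegral.integral_symm 1 v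
    rw [this]
    exact h1.neg
  have hφderiv : deriv φ = fun y => -u y := funext fun y => (hφd y).deriv
  have hφcd : ContDiff ℝ 2 φ := by
    rw [show (2 : WithTop ℕ∞) = 1 + 1 from rfl, contDiff_succ_iff_deriv]
    refine ⟨fun y => (hφd y).differentiableAt, by simp, ?_⟩
    rw [hφderiv]; exact hucd.neg
  -- endpoint values of u
  have hu1 : u 1 = 0 := by simp [hu]
  have hum1 : u (-1) = 0 := by
    simp only [hu]
    norm_num
  -- φ 1 = 0
  have hφ1 : φ 1 = 0 := by simp [hφ]
  -- odd
  have huodd : ∀ t, u (-t) = -u t := by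
    intro t
    simp only [hu, neg_sq]
    rw [show ((-t)^(2*n) : ℝ) = t^(2*n) from by rw [pow_mul, pow_mul, neg_sq]]
    ring
  have hφm1 : φ (-1) = 0 := by
    have h1 : ∫ t in (0:ℝ)..1, u (-t) = ∫ t in (-1:ℝ)..0, u t := by
      simpa using intervalIntegral.integral_comp_neg (a := (0:ℝ)) (b := 1) u
    have h2 : ∫ t in (0:ℝ)..1, u (-t) = -∫ t in (0:ℝ)..1, u t := by
      rw [intervalIntegral.integral_congr (fun t _ => huodd t), intervalIntegral.integral_neg]
    have h3 : (∫ t in (-1:ℝ)..0, u t) + ∫ t in (0:ℝ)..1, u t = ∫ t in (-1:ℝ)..1, u t :=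
      intervalIntegral.integral_add_adjacent_intervals (huint _ _) (huint _ _)
    have : ∫ t in (-1:ℝ)..1, u t = 0 := by rw [← h3, ← h1, h2]; ring
    simp [hφ, this]
  -- lower bound for φ 0
  have hA : ∫ t in (0:ℝ)..1, t / Real.sqrt (t^2+ε^2)
      = Real.sqrt (1+ε^2) - Real.sqrt (ε^2) := by
    have : ∀ t ∈ Set.uIcc (0:ℝ) 1, HasDerivAt (fun s => Real.sqrt (s^2+ε^2))
        (t / Real.sqrt (t^2+ε^2)) t := by
      intro t _
      have hin : HasDerivAt (fun s : ℝ => s^2+ε^2) (2*t) t := by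
        simpa using ((hasDerivAt_pow 2 t).add_const (ε^2))
      have := (Real.hasDerivAt_sqrt (hsq t).ne').comp t hin
      refine this.congr_deriv ?_
      field_simp
    rw [intervalIntegral.integral_eq_sub_of_hasDerivAt this]
    · norm_num
    · apply Continuous.intervalIntegrable
      exact continuous_id.div (by fun_prop) (fun t => (hsqrtpos t).ne')
  have hBpos : 0 ≤ ∫ t in (0:ℝ)..1, t^(2*n+1) / Real.sqrt (t^2+ε^2) := by
    apply intervalIntegral.integral_nonneg (by norm_num)
    intro t ht
    have := hsqrtpos t
    have ht0 : 0 ≤ t := ht.1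
    positivity
  have hBle : ∫ t in (0:ℝ)..1, t^(2*n+1) / Real.sqrt (t^2+ε^2) ≤ 1/(2*n+1) := by
    have hmono : ∫ t in (0:ℝ)..1, t^(2*n+1) / Real.sqrt (t^2+ε^2)
        ≤ ∫ t in (0:ℝ)..1, t^(2*n) := by
      apply intervalIntegral.integral_mono_on (by norm_num)
      · apply Continuous.intervalIntegrable
        exact (by fun_prop : Continuous fun t : ℝ => t^(2*n+1)).div (by fun_prop)
          (fun t => (hsqrtpos t).ne')
      · apply Continuous.intervalIntegrable; fun_prop
      · intro t ht
        rw [div_le_iff₀ (hsqrtpos t)]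
        have h1 : t ≤ Real.sqrt (t^2+ε^2) := by
          rw [show t^2 + ε^2 = t^2 + ε^2 from rfl]
          calc t ≤ |t| := le_abs_self t
          _ = Real.sqrt (t^2) := (Real.sqrt_sq_eq_abs t).symm
          _ ≤ Real.sqrt (t^2+ε^2) := Real.sqrt_le_sqrt (by nlinarith)
        calc t^(2*n+1) = t^(2*n) * t := by ring
        _ ≤ t^(2*n) * Real.sqrt (t^2+ε^2) := by
            apply mul_le_mul_of_nonneg_left h1 (pow_nonneg ht.1 _)
    calc _ ≤ ∫ t in (0:ℝ)..1, t^(2*n) := hmono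
    _ = 1/(2*n+1) := by rw [integral_pow]; push_cast; norm_num
  have hφ0 : 1 - η ≤ φ 0 := by
    have hsplit : ∀ t : ℝ, u t = t / Real.sqrt (t^2+ε^2) - t^(2*n+1) / Real.sqrt (t^2+ε^2) := by
      intro t
      rw [hu]
      rw [← sub_div]
      congr 1
      ring
    have : φ 0 = (∫ t in (0:ℝ)..1, t / Real.sqrt (t^2+ε^2))
        - ∫ t in (0:ℝ)..1, t^(2*n+1) / Real.sqrt (t^2+ε^2) := by
      rw [hφ]
      simp only []
      rw [intervalIntegral.integral_congr (fun t _ => hsplit t)]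
      apply intervalIntegral.integral_sub
      · apply Continuous.intervalIntegrable
        exact continuous_id.div (by fun_prop) (fun t => (hsqrtpos t).ne')
      · apply Continuous.intervalIntegrable
        exact (by fun_prop : Continuous fun t : ℝ => t^(2*n+1)).div (by fun_prop)
          (fun t => (hsqrtpos t).ne')
    rw [this, hA]
    have h1 : (1:ℝ) ≤ Real.sqrt (1+ε^2) := by
      nlinarith [Real.sq_sqrt (show (0:ℝ) ≤ 1+ε^2 by positivity), Real.sqrt_nonneg (1+ε^2)]
    have h2 : Real.sqrt (ε^2) = ε := Real.sqrt_sq hε0.le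
    have h3 := hBle.trans hn1
    have h4 : ε = η/2 := hε
    linarith
  -- integral of u^2 at most 2
  have husq : ∫ y in (-1:ℝ)..1, (deriv φ y)^2 ≤ 2 := by
    rw [hφderiv]
    have : ∀ y ∈ Set.Icc (-1:ℝ) 1, (-u y)^2 ≤ 1 := by
      intro y hy
      rw [neg_sq, hu]
      simp only []
      rw [div_pow, Real.sq_sqrt (hsq y).le]
      rw [div_le_one (hsq y)]
      have hy2 : y^2 ≤ 1 := by nlinarith [hy.1, hy.2]
      have hyp : (0:ℝ) ≤ y^(2*n) := by rw [pow_mul]; positivity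
      have hyp1 : y^(2*n) ≤ 1 := by
        rw [pow_mul]
        exact pow_le_one₀ (by positivity) hy2
      have h5 : (1 - y^(2*n))^2 ≤ 1 := by nlinarith
      have h6 : y^2*(1 - y^(2*n))^2 ≤ y^2 := mul_le_of_le_one_right (sq_nonneg y) h5
      nlinarith [sq_nonneg ε]
    calc ∫ y in (-1:ℝ)..1, (-u y)^2 ≤ ∫ y in (-1:ℝ)..1, (1:ℝ) := by
          apply intervalIntegral.integral_mono_on (by norm_num)
          · apply Continuous.intervalIntegrable; fun_prop
          · exact intervalIntegrable_const
          · exact this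
    _ = 2 := by simp; norm_num
  have hd1 : deriv φ 1 = 0 := by rw [hφderiv]; simp [hu1]
  have hdm1 : deriv φ (-1) = 0 := by rw [hφderiv]; simp [hum1]
  exact ⟨φ, hφcd, hφm1, hφ1, hdm1, hd1, hφ0, husq⟩
lemma clamp_package {φ : ℝ → ℝ} (hφ : ContDiff ℝ 1 φ)
    (hm1 : φ (-1) = 0) (h1 : φ 1 = 0) (h0 : φ 0 ≠ 0) :
    ∃ ψ : ℝ → ℝ, (∃ K, LipschitzWith K ψ) ∧ ψ (-1) = 0 ∧ ψ 1 = 0 ∧ ψ 0 = φ 0 ∧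
      ¬ (∀ᵐ y ∂(volume.restrict (Icc (-1:ℝ) 1)), ψ y = 0) ∧
      (∫ y in (-1:ℝ)..1, (deriv ψ y) ^ 2) = ∫ y in (-1:ℝ)..1, (deriv φ y) ^ 2 := by
  classical
  set c : ℝ → ℝ := fun y => max (-1) (min y 1) with hc
  have hclip : LipschitzWith 1 c := by
    have := (LipschitzWith.id (α := ℝ)).min_const 1
    simpa [hc] using (this.const_max (-1))
  set ψ : ℝ → ℝ := φ ∘ c with hψ
  -- ψ is Lipschitz
  have hrange : ∀ y, c y ∈ Icc (-1:ℝ) 1 := by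
    intro y
    constructor
    · exact le_max_left _ _
    · have : min y 1 ≤ 1 := min_le_right _ _
      exact max_le (by norm_num) this
  have hKex : ∃ K, LipschitzWith K ψ := by
    obtain ⟨M, hM⟩ : ∃ M : NNReal, ∀ x ∈ Icc (-1:ℝ) 1, ‖deriv φ x‖₊ ≤ M := by
      obtain ⟨M, hM⟩ := (isCompact_Icc (a := (-1:ℝ)) (b := 1)).exists_bound_of_continuousOn
        (hφ.continuous_deriv le_rfl).continuousOn
      refine ⟨M.toNNReal, fun x hx => ?_⟩
      have := hM x hx
      simp only [← NNReal.coe_le_coe, coe_nnnorm, Real.coe_toNNReal']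
      exact le_trans this (le_max_left _ _)
    have hlip : LipschitzOnWith M φ (Icc (-1:ℝ) 1) :=
      (convex_Icc _ _).lipschitzOnWith_of_nnnorm_deriv_le
        (fun x _ => hφ.differentiable one_ne_zero x) hM
    refine ⟨M * 1, ?_⟩
    have : LipschitzOnWith (M * 1) (φ ∘ c) univ :=
      hlip.comp ((hclip.lipschitzOnWith) ) (fun y _ => hrange y)
    rw [lipschitzOnWith_univ] at this
    exact this
  -- values
  have hcval : ∀ y ∈ Icc (-1:ℝ) 1, c y = y := by
    intro y hy
    simp only [hc]
    rw [min_eq_left hy.2, max_eq_right hy.1]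
  have hψ0 : ψ 0 = φ 0 := by simp [hψ, hcval 0 (by norm_num)]
  have hψm1 : ψ (-1) = 0 := by simp [hψ, hcval (-1) (by norm_num), hm1]
  have hψ1 : ψ 1 = 0 := by simp [hψ, hcval 1 (by norm_num), h1]
  -- deriv equality on Ioo
  have hderiv : ∀ y ∈ Ioo (-1:ℝ) 1, deriv ψ y = deriv φ y := by
    intro y hy
    apply Filter.EventuallyEq.deriv_eq
    have : Ioo (-1:ℝ) 1 ∈ 𝓝 y := (isOpen_Ioo).mem_nhds hy
    filter_upwards [this] with z hz
    simp [hψ, hcval z (Ioo_subset_Icc_self hz)]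
  -- integrals equal
  have hint : ∫ y in (-1:ℝ)..1, (deriv ψ y)^2 = ∫ y in (-1:ℝ)..1, (deriv φ y)^2 := by
    apply intervalIntegral.integral_congr_ae
    have h1m : (volume : Measure ℝ) {(1:ℝ)} = 0 := measure_singleton 1
    rw [MeasureTheory.ae_iff]
    refine measure_mono_null (fun x hx => ?_) h1m
    simp only [Set.mem_setOf_eq, not_forall] at hx
    obtain ⟨hxI, hne⟩ := hx
    rw [Set.uIoc_of_le (by norm_num : (-1:ℝ) ≤ 1)] at hxI
    by_contra hx1
    have hxo : x ∈ Ioo (-1:ℝ) 1 := ⟨hxI.1, lt_of_le_of_ne hxI.2 hx1⟩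
    exact hne (by rw [hderiv x hxo])
  -- not a.e. zero
  have hnae : ¬ (∀ᵐ y ∂(volume.restrict (Icc (-1:ℝ) 1)), ψ y = 0) := by
    intro hae
    have hcont : Continuous ψ := hKex.choose_spec.continuous
    have : ∀ᶠ y in 𝓝 (0:ℝ), ψ y ≠ 0 := by
      have : {x : ℝ | ψ x ≠ 0} ∈ 𝓝 (0:ℝ) :=
        (isOpen_ne.preimage hcont).mem_nhds (by simpa [hψ0] using h0)
      exact this
    obtain ⟨δ, hδ0, hδ⟩ := Metric.eventually_nhds_iff_ball.1 this
    set δ' := min δ 1 with hδ'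
    have hδ'0 : 0 < δ' := lt_min hδ0 one_pos
    have hsub : Ioo (-δ') δ' ⊆ {y | ψ y = 0}ᶜ := by
      intro y hy
      apply hδ
      rw [Metric.mem_ball, Real.dist_eq, sub_zero, abs_lt]
      have h1 : δ' ≤ δ := min_le_left _ _
      exact ⟨by linarith [hy.1], by linarith [hy.2]⟩
    have hmeas0 : (volume.restrict (Icc (-1:ℝ) 1)) {y | ψ y = 0}ᶜ = 0 := by
      rw [MeasureTheory.ae_iff] at hae
      exact hae
    have : (volume.restrict (Icc (-1:ℝ) 1)) (Ioo (-δ') δ') = 0 :=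
      measure_mono_null hsub hmeas0
    rw [Measure.restrict_apply measurableSet_Ioo] at this
    have hsub2 : Ioo (-δ') δ' ⊆ Icc (-1:ℝ) 1 := by
      intro y hy
      have h1 : δ' ≤ 1 := min_le_right _ _
      exact ⟨by linarith [hy.1], by linarith [hy.2]⟩
    rw [Set.inter_eq_left.2 hsub2, Real.volume_Ioo] at this
    rw [ENNReal.ofReal_eq_zero] at this
    linarith
  exact ⟨ψ, hKex, hψm1, hψ1, hψ0, hnae, hint⟩


lemma key_ineq {g ρp ρm Bc : ℝ} (hgρ : 0 < g * (ρp - ρm))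
    (hBcsq : Bc ^ 2 = sSup (BcSet g ρp ρm)) {φ : ℝ → ℝ} (hφ : ContDiff ℝ 1 φ)
    (hm1 : φ (-1) = 0) (h1 : φ 1 = 0) :
    g * (ρp - ρm) * (φ 0) ^ 2 ≤ Bc ^ 2 * ∫ y in (-1:ℝ)..1, (deriv φ y) ^ 2 := by
  set I := ∫ y in (-1:ℝ)..1, (deriv φ y) ^ 2 with hI
  have hI0 : 0 ≤ I := intervalIntegral.integral_nonneg (by norm_num) (fun x _ => sq_nonneg _)
  by_cases h0 : φ 0 = 0
  · rw [h0]
    have : (0:ℝ) ≤ Bc ^ 2 * I := mul_nonneg (sq_nonneg _) hI0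
    simpa using this
  obtain ⟨ψ, ⟨K, hK⟩, hψm1, hψ1, hψ0, hnae, hint⟩ := clamp_package hφ hm1 h1 h0
  -- Cauchy–Schwarz via the Lipschitz representative
  have hcsψ : (φ 0) ^ 2 ≤ I := by
    have hft : ∫ y in (-1:ℝ)..0, deriv ψ y = φ 0 := by
      rw [lipschitz_ftc hK (by norm_num), hψ0, hψm1, sub_zero]
    have hcs := cs_interval (by norm_num : (-1:ℝ) ≤ 0)
      (intervalIntegrable_deriv_lip hK _ _) (intervalIntegrable_deriv_sq_lip hK _ _)
    rw [hft] at hcs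
    have hsplit : (∫ y in (-1:ℝ)..0, (deriv ψ y)^2) + ∫ y in (0:ℝ)..1, (deriv ψ y)^2
        = ∫ y in (-1:ℝ)..1, (deriv ψ y)^2 :=
      intervalIntegral.integral_add_adjacent_intervals
        (intervalIntegrable_deriv_sq_lip hK _ _) (intervalIntegrable_deriv_sq_lip hK _ _)
    have hpos2 : 0 ≤ ∫ y in (0:ℝ)..1, (deriv ψ y)^2 :=
      intervalIntegral.integral_nonneg (by norm_num) (fun x _ => sq_nonneg _)
    have := hint
    rw [← hI] at this
    nlinarith
  have hIpos : 0 < I := by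
    rcases eq_or_lt_of_le hI0 with h | h
    · exfalso
      apply h0
      have : (φ 0)^2 ≤ 0 := by rw [← h] at hcsψ; exact hcsψ
      nlinarith [sq_nonneg (φ 0)]
    · exact h
  -- membership of the Rayleigh quotient in BcSet
  have hmem : g * (ρp - ρm) * (φ 0) ^ 2 / I ∈ BcSet g ρp ρm :=
    ⟨ψ, ⟨K, hK⟩, hψm1, hψ1, hnae, by rw [hψ0, hint, hI]⟩
  have hbdd : BddAbove (BcSet g ρp ρm) := ⟨g * (ρp - ρm) / 2, fun r hr => bcset_le hgρ hr⟩
  have hle : g * (ρp - ρm) * (φ 0) ^ 2 / I ≤ Bc ^ 2 := by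
    rw [hBcsq]; exact le_csSup hbdd hmem
  rw [div_le_iff₀ hIpos] at hle
  linarith

lemma xivc_nonneg {g ρp ρm b : ℝ} {r : ℝ} (hr : r ∈ XivcSet g ρp ρm b) : 0 ≤ r := by
  obtain ⟨φ, -, -, -, -, -, hD, hreq⟩ := hr
  have hN : 0 ≤ ∫ y in (-1:ℝ)..1, (deriv (deriv φ) y) ^ 2 :=
    intervalIntegral.integral_nonneg (by norm_num) (fun x _ => sq_nonneg _)
  rw [hreq]
  positivity

lemma contDiff_one_deriv {φ : ℝ → ℝ} (hφ : ContDiff ℝ 2 φ) : ContDiff ℝ 1 (deriv φ) := by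
  have h := (contDiff_succ_iff_deriv (n := 1)).1 (by
    rwa [show ((1:WithTop ℕ∞) + 1) = 2 from rfl])
  exact h.2.2

lemma xivc_lb {g ρp ρm Bc b : ℝ} (hgρ : 0 < g * (ρp - ρm))
    (hBcsq : Bc ^ 2 = sSup (BcSet g ρp ρm)) (hb : 0 < b) (hbB : b < Bc)
    {r : ℝ} (hr : r ∈ XivcSet g ρp ρm b) :
    b ^ 2 / (4 * (Bc ^ 2 - b ^ 2)) ≤ r := by
  obtain ⟨φ, hφ, hm1, h1, hdm1, hd1, hD, hreq⟩ := hr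
  set I := ∫ y in (-1:ℝ)..1, (deriv φ y) ^ 2 with hI
  set N := ∫ y in (-1:ℝ)..1, (deriv (deriv φ) y) ^ 2 with hN
  have hBcpos : 0 < Bc := lt_trans hb hbB
  have hNint : Continuous (deriv (deriv φ)) := by
    have := contDiff_one_deriv hφ
    exact ((contDiff_succ_iff_deriv (n := 0)).1 (by
      rwa [show ((0:WithTop ℕ∞) + 1) = 1 from rfl])).2.2.continuous
  have hφ'diff : ∀ y : ℝ, HasDerivAt (deriv φ) (deriv (deriv φ) y) y := fun y =>
    ((contDiff_one_deriv hφ).differentiable one_ne_zero y).hasDerivAt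
  have hN0 : 0 ≤ N := intervalIntegral.integral_nonneg (by norm_num) (fun x _ => sq_nonneg _)
  -- Poincaré : I ≤ 4 N
  have hIN : I ≤ 4 * N := by
    have hptwise : ∀ y ∈ Icc (-1:ℝ) 1, (deriv φ y) ^ 2 ≤ 2 * N := by
      intro y hy
      have hftc : ∫ t in (-1:ℝ)..y, deriv (deriv φ) t = deriv φ y := by
        rw [intervalIntegral.integral_eq_sub_of_hasDerivAt
          (fun t _ => hφ'diff t) ((hNint.intervalIntegrable _ _)), hdm1, sub_zero]
      have hcs := cs_interval (show (-1:ℝ) ≤ y from hy.1)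
        (hNint.intervalIntegrable _ _) (((hNint.pow 2)).intervalIntegrable _ _)
      rw [hftc] at hcs
      have hmono : ∫ t in (-1:ℝ)..y, (deriv (deriv φ) t)^2 ≤ N := by
        have hsplit : (∫ t in (-1:ℝ)..y, (deriv (deriv φ) t)^2)
            + ∫ t in y..(1:ℝ), (deriv (deriv φ) t)^2 = N :=
          intervalIntegral.integral_add_adjacent_intervals
            (((hNint.pow 2)).intervalIntegrable _ _) (((hNint.pow 2)).intervalIntegrable _ _)
        have h2 : 0 ≤ ∫ t in y..(1:ℝ), (deriv (deriv φ) t)^2 :=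
          intervalIntegral.integral_nonneg hy.2 (fun x _ => sq_nonneg _)
        linarith
      have hipos : 0 ≤ ∫ t in (-1:ℝ)..y, (deriv (deriv φ) t)^2 :=
        intervalIntegral.integral_nonneg hy.1 (fun x _ => sq_nonneg _)
      have hy1 : y - (-1) ≤ 2 := by linarith [hy.2]
      nlinarith
    calc I ≤ ∫ y in (-1:ℝ)..1, 2*N := by
          apply intervalIntegral.integral_mono_on (by norm_num)
          · exact (((contDiff_one_deriv hφ).continuous.pow 2).intervalIntegrable _ _)
          · exact intervalIntegrable_const
          · exact hptwise
    _ = 4 * N := by rw [intervalIntegral.integral_const]; simp; ring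
  -- key inequality
  have hkey := key_ineq hgρ hBcsq (hφ.of_le (by norm_num)) hm1 h1
  rw [← hI] at hkey
  set D := g * (ρp - ρm) * (φ 0) ^ 2 - b ^ 2 * I with hDdef
  have hDle : D ≤ (Bc ^ 2 - b ^ 2) * I := by rw [hDdef]; nlinarith
  have hDle2 : D ≤ (Bc ^ 2 - b ^ 2) * (4 * N) := by
    refine hDle.trans ?_
    apply mul_le_mul_of_nonneg_left hIN (by nlinarith)
  have hBb : 0 < Bc ^ 2 - b ^ 2 := by nlinarith
  rw [hreq, div_le_div_iff₀ (by positivity) hD]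
  nlinarith [hD, hb, sq_nonneg b]

lemma xivc_ne {g ρp ρm Bc b : ℝ} (hgρ : 0 < g * (ρp - ρm))
    (hBc2 : Bc ^ 2 ≤ g * (ρp - ρm) / 2) (hb : 0 < b) (hbB : b < Bc) :
    (XivcSet g ρp ρm b).Nonempty := by
  set G := g * (ρp - ρm) with hG
  have hBcpos : 0 < Bc := lt_trans hb hbB
  have hb2 : 2 * b ^ 2 < G := by nlinarith
  set s := Real.sqrt (2 * b ^ 2 / G) with hs
  have hs2 : s ^ 2 = 2 * b ^ 2 / G := Real.sq_sqrt (by positivity)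
  have hs0 : 0 ≤ s := Real.sqrt_nonneg _
  have hs1 : s < 1 := by nlinarith [hs2, (div_lt_one hgρ).2 hb2]
  set η := (1 - s) / 2 with hη
  have hη0 : 0 < η := by rw [hη]; linarith
  have hη1 : η < 1 := by rw [hη]; linarith
  obtain ⟨φ, hcd, hm1, h1, hdm1, hd1, hφ0, hIle⟩ := family_exists hη0 hη1
  have hpos : 0 < G * (φ 0) ^ 2 - b ^ 2 * ∫ y in (-1:ℝ)..1, (deriv φ y) ^ 2 := by
    have h1η : 0 < 1 - η := by linarith
    have hφ0sq : (1 - η) ^ 2 ≤ (φ 0) ^ 2 := by nlinarith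
    have hGs : G * s ^ 2 = 2 * b ^ 2 := by
      rw [hs2]; field_simp
    have hkey : 2 * b ^ 2 < G * (1 - η) ^ 2 := by
      have : (1 - η) = (1 + s) / 2 := by rw [hη]; ring
      rw [this]
      have h2 : s ^ 2 < ((1 + s)/2) ^ 2 := by nlinarith
      nlinarith
    have hIle' := hIle
    nlinarith [mul_le_mul_of_nonneg_left hIle' (sq_nonneg b),
      mul_le_mul_of_nonneg_left hφ0sq hgρ.le]
  exact ⟨_, φ, hcd, hm1, h1, hdm1, hd1, by rw [← hG]; exact hpos, rfl⟩

lemma xivc_small {g ρp ρm b : ℝ} (hgρ : 0 < g * (ρp - ρm)) (hb : 0 < b)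
    (hsm : b ^ 2 * (256/105) ≤ g * (ρp - ρm) / 2) :
    sInf (XivcSet g ρp ρm b) ≤ b ^ 2 * (256 / (5 * (g * (ρp - ρm)))) := by
  set G := g * (ρp - ρm) with hG
  have hφ00 : φ₀ 0 = 1 := by unfold φ₀; norm_num
  have hDpos : 0 < G * (φ₀ 0) ^ 2 - b ^ 2 * ∫ y in (-1:ℝ)..1, (deriv φ₀ y) ^ 2 := by
    rw [hφ00, φ₀_int1]; nlinarith
  have hmem : (b ^ 2 * ∫ y in (-1:ℝ)..1, (deriv (deriv φ₀) y) ^ 2) /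
      (G * (φ₀ 0) ^ 2 - b ^ 2 * ∫ y in (-1:ℝ)..1, (deriv φ₀ y) ^ 2) ∈ XivcSet g ρp ρm b := by
    refine ⟨φ₀, φ₀_contDiff, by unfold φ₀; norm_num, by unfold φ₀; norm_num, ?_, ?_, ?_, rfl⟩
    · rw [φ₀_deriv]; norm_num
    · rw [φ₀_deriv]; norm_num
    · exact hDpos
  have hbdd : BddBelow (XivcSet g ρp ρm b) := ⟨0, fun r hr => xivc_nonneg hr⟩
  refine (csInf_le hbdd hmem).trans ?_
  rw [hφ00, φ₀_int1, φ₀_int2]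
  have hden : G / 2 ≤ G * 1 ^ 2 - b ^ 2 * (256/105) := by nlinarith
  have h0 : 0 < G / 2 := by positivity
  calc b ^ 2 * (128/5) / (G * 1 ^ 2 - b ^ 2 * (256/105)) ≤ b ^ 2 * (128/5) / (G / 2) := by
        apply div_le_div_of_nonneg_left (by positivity) h0 hden
  _ = b ^ 2 * (256 / (5 * G)) := by field_simp; ring

/-- as a function of `B ∈ (0, |B|_c)`, the vertical critical frequency tends to
`0` as `B → 0⁺` and to `+∞` as `B → |B|_c⁻`. -/
theorem vertical_critical_frequency_limits
    (ρp ρm g Bc : ℝ)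
    (hρm : 0 < ρm) (hρ : ρm < ρp) (hg : 0 < g)
    (hBc : 0 < Bc) (hBcsq : Bc ^ 2 = sSup (BcSet g ρp ρm)) :
    ∀ f : ℝ → ℝ,
      (∀ b : ℝ, 0 < b → b < Bc → 0 ≤ f b ∧ (f b) ^ 2 = sInf (XivcSet g ρp ρm b)) →
      Tendsto f (𝓝[Ioo (0:ℝ) Bc] 0) (𝓝 0) ∧
      Tendsto f (𝓝[Ioo (0:ℝ) Bc] Bc) atTop := by
  intro f hf
  have hgρ : 0 < g * (ρp - ρm) := by nlinarith
  have hBc2 : Bc ^ 2 ≤ g * (ρp - ρm) / 2 := by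
    rw [hBcsq]; exact Real.sSup_le (fun r hr => bcset_le hgρ hr) (by positivity)
  constructor
  · -- limit 0 at 0⁺
    set C := 256 / (5 * (g * (ρp - ρm))) with hC
    have hC0 : 0 ≤ C := by positivity
    apply tendsto_of_tendsto_of_tendsto_of_le_of_le' (g := fun _ : ℝ => (0:ℝ))
      (h := fun b => Real.sqrt C * b)
    · exact tendsto_const_nhds
    · have : Tendsto (fun b : ℝ => Real.sqrt C * b) (𝓝[Ioo (0:ℝ) Bc] 0)
          (𝓝 (Real.sqrt C * 0)) :=
        ((continuous_const.mul continuous_id).tendsto 0).mono_left nhdsWithin_le_nhds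
      simpa using this
    · filter_upwards [self_mem_nhdsWithin] with b hb
      exact (hf b hb.1 hb.2).1
    · have hδ0 : (0:ℝ) < Real.sqrt (g * (ρp - ρm) / 2 * (105/256)) := by positivity
      have hball : Iio (Real.sqrt (g * (ρp - ρm) / 2 * (105/256))) ∈ 𝓝 (0:ℝ) :=
        Iio_mem_nhds hδ0
      filter_upwards [self_mem_nhdsWithin, mem_nhdsWithin_of_mem_nhds hball] with b hb hbδ
      have hb0 : 0 < b := hb.1
      have hsm : b ^ 2 * (256/105) ≤ g * (ρp - ρm) / 2 := by
        have hsq := Real.sq_sqrt (show (0:ℝ) ≤ g * (ρp - ρm) / 2 * (105/256) by positivity)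
        have hb2 : b ^ 2 < g * (ρp - ρm) / 2 * (105/256) := by
          have hlt : b < Real.sqrt (g * (ρp - ρm) / 2 * (105/256)) := hbδ
          nlinarith [Real.sqrt_nonneg (g * (ρp - ρm) / 2 * (105/256))]
        nlinarith
      obtain ⟨hf0, hfsq⟩ := hf b hb0 hb.2
      have hle := xivc_small hgρ hb0 hsm
      rw [← hfsq, ← hC] at hle
      have hcb : 0 ≤ Real.sqrt C * b := by positivity
      have hsq2 : (f b) ^ 2 ≤ (Real.sqrt C * b) ^ 2 := by
        rw [mul_pow, Real.sq_sqrt hC0]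
        calc (f b)^2 ≤ b^2 * C := hle
        _ = C * b^2 := by ring
      calc f b = Real.sqrt ((f b)^2) := (Real.sqrt_sq hf0).symm
      _ ≤ Real.sqrt ((Real.sqrt C * b)^2) := Real.sqrt_le_sqrt hsq2
      _ = Real.sqrt C * b := Real.sqrt_sq hcb
  · -- limit ∞ at Bc⁻
    rw [tendsto_atTop]
    intro M
    set M' := max M 1 with hM'
    have hM0 : 0 < M' := lt_of_lt_of_le one_pos (le_max_right _ _)
    set δ := min (Bc/2) (Bc/(32*M'^2)) with hδdef
    have hδ0 : 0 < δ := lt_min (by positivity) (by positivity)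
    have hball : Ioi (Bc - δ) ∈ 𝓝 Bc := Ioi_mem_nhds (by linarith)
    filter_upwards [self_mem_nhdsWithin, mem_nhdsWithin_of_mem_nhds hball] with b hb hbδ
    have hbδ' : Bc - δ < b := hbδ
    obtain ⟨hf0, hfsq⟩ := hf b hb.1 hb.2
    refine le_trans (le_max_left M 1) ?_
    have hlow : b^2/(4*(Bc^2 - b^2)) ≤ sInf (XivcSet g ρp ρm b) :=
      le_csInf (xivc_ne hgρ hBc2 hb.1 hb.2) (fun r hr => xivc_lb hgρ hBcsq hb.1 hb.2 hr)
    have hBb : 0 < Bc^2 - b^2 := by nlinarith [hb.1, hb.2]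
    have hb2 : Bc/2 ≤ b := by
      have h1 : δ ≤ Bc/2 := min_le_left _ _
      linarith
    have hgap : Bc^2 - b^2 ≤ 2*Bc*δ := by
      have h1 : 0 ≤ δ - (Bc - b) := by linarith
      have h2 : 0 ≤ Bc + b := by linarith [hb.1]
      have h3 : 0 ≤ (δ - (Bc - b)) * (Bc + b) := mul_nonneg h1 h2
      have h4 : 0 ≤ δ * (Bc - b) := mul_nonneg hδ0.le (by linarith [hb.2])
      nlinarith
    have hM'sq : M'^2 ≤ b^2/(4*(Bc^2 - b^2)) := by
      have hδ2 : δ ≤ Bc/(32*M'^2) := min_le_right _ _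
      rw [le_div_iff₀ (by positivity)]
      have h8 : 4*(Bc^2 - b^2) ≤ 8*Bc*δ := by linarith
      have h9 : 8*Bc*δ ≤ Bc^2/(4*M'^2) := by
        have := mul_le_mul_of_nonneg_left hδ2 (by positivity : (0:ℝ) ≤ 8*Bc)
        calc 8*Bc*δ ≤ 8*Bc*(Bc/(32*M'^2)) := this
        _ = Bc^2/(4*M'^2) := by field_simp; ring
      have h10 : M'^2*(4*(Bc^2 - b^2)) ≤ M'^2*(Bc^2/(4*M'^2)) :=
        mul_le_mul_of_nonneg_left (h8.trans h9) (by positivity)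
      have h11 : M'^2*(Bc^2/(4*M'^2)) = Bc^2/4 := by field_simp
      have h12 : Bc^2/4 ≤ b^2 := by nlinarith [hb2, hb.1]
      nlinarith
    have hfin : M'^2 ≤ (f b)^2 := by rw [hfsq]; exact hM'sq.trans hlow
    calc M' = Real.sqrt (M'^2) := (Real.sqrt_sq hM0.le).symm
    _ ≤ Real.sqrt ((f b)^2) := Real.sqrt_le_sqrt hfin
    _ = f b := Real.sqrt_sq hf0


end
end
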